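/- (Existence of the Steinberg representation of GL_n.) Let 𝔽 be a finite field with q elements, n ≥ 1, G = GL_n(𝔽), and B ≤ G the subgroup of invertible upper-triangular matrices. Then the permutation representation ℂ[G/B] of G has an irreducible subrepresentation of dimension q^{n(n−1)/2}. -/

import Mathlib

open Matrix

set_option synthInstance.maxHeartbeats 1000000
set_option maxHeartbeats 1000000

/-- The Borel subgroup of `GL_n(𝔽)` consisting of invertible upper-triangular
matrices. -/
def BorelGL (𝔽 : Type*) [Field 𝔽] (n : ℕ) : Subgroup (GL (Fin n) 𝔽) where
  carrier := {g | Matrix.BlockTriangular (g : Matrix (Fin n) (Fin n) 𝔽) id}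
  one_mem' := by simpa using Matrix.blockTriangular_one (α := Fin n)
  mul_mem' := by
    intro a b ha hb
    simpa [Units.val_mul] using Matrix.BlockTriangular.mul ha hb
  inv_mem' := by
    intro a ha
    haveI : Invertible ((a : Matrix (Fin n) (Fin n) 𝔽)) := a.invertible
    simpa [Matrix.coe_units_inv] using Matrix.blockTriangular_inv_of_blockTriangular ha

/-- The permutation representation of `G = GL_n(𝔽)` on `ℂ[G/B]`, realized as the space of
`ℂ`-valued functions on the coset space `G/B`, with `(g • f)(x) = f (g⁻¹ • x)`. This is
the representation `Ind_B^G 1` induced from the trivial representation of the Borel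
subgroup `B`. -/
def permRep (𝔽 : Type*) [Field 𝔽] (n : ℕ) :
    Representation ℂ (GL (Fin n) 𝔽) ((GL (Fin n) 𝔽 ⧸ BorelGL 𝔽 n) → ℂ) where
  toFun g := LinearMap.funLeft ℂ ℂ fun x => g⁻¹ • x
  map_one' := by
    refine LinearMap.ext fun f => funext fun x => ?_
    simp [LinearMap.funLeft_apply, inv_one, one_smul]
  map_mul' g h := by
    refine LinearMap.ext fun f => funext fun x => ?_
    simp [LinearMap.funLeft_apply, _root_.mul_inv_rev, mul_smul]

/-- A submodule `W` is invariant under a representation `ρ` if `ρ g` maps `W` into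
itself for every `g`. -/
def RepInvariant {G V : Type*} [Group G] [AddCommGroup V] [Module ℂ V]
    (ρ : Representation ℂ G V) (W : Submodule ℂ V) : Prop :=
  ∀ g : G, ∀ v ∈ W, ρ g v ∈ W

/-- The subrepresentation of a representation `ρ` on an invariant submodule `W`. -/
def subRep {G V : Type*} [Group G] [AddCommGroup V] [Module ℂ V]
    (ρ : Representation ℂ G V) (W : Submodule ℂ V) (h : RepInvariant ρ W) :
    Representation ℂ G W where
  toFun g := (ρ g).restrict fun v hv => h g v hv
  map_one' := by
    refine LinearMap.ext fun v => Subtype.ext ?_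
    simp [LinearMap.restrict_apply]
  map_mul' g₁ g₂ := by
    refine LinearMap.ext fun v => Subtype.ext ?_
    simp [LinearMap.restrict_apply]

/-- A representation is irreducible if the underlying space is nonzero and its only
invariant subspaces are `⊥` and `⊤`. -/
def IsIrreducibleRep {G V : Type*} [Group G] [AddCommGroup V] [Module ℂ V]
    (ρ : Representation ℂ G V) : Prop :=
  (⊥ : Submodule ℂ V) ≠ ⊤ ∧ ∀ W : Submodule ℂ V, RepInvariant ρ W → W = ⊥ ∨ W = ⊤


attribute [local instance] Classical.decEq
attribute [local instance] Classical.propDecidable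


section Prelim
variable {𝔽 : Type*} [Field 𝔽] {n : ℕ}

/-- linear equivalence given by a `GL` element -/
noncomputable def Lg (g : GL (Fin n) 𝔽) : (Fin n → 𝔽) ≃ₗ[𝔽] (Fin n → 𝔽) :=
  LinearEquiv.ofLinear (mulVecLin (g : Matrix (Fin n) (Fin n) 𝔽))
    (mulVecLin ((g⁻¹ : GL (Fin n) 𝔽) : Matrix (Fin n) (Fin n) 𝔽))
    (by rw [← mulVecLin_mul]; norm_cast; rw [mul_inv_cancel]; simp [mulVecLin_one])
    (by rw [← mulVecLin_mul]; norm_cast; rw [inv_mul_cancel]; simp [mulVecLin_one])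

@[simp] lemma Lg_apply (g : GL (Fin n) 𝔽) (x : Fin n → 𝔽) :
    Lg g x = (g : Matrix (Fin n) (Fin n) 𝔽) *ᵥ x := rfl

lemma Lg_mul (g h : GL (Fin n) 𝔽) (A : Submodule 𝔽 (Fin n → 𝔽)) :
    A.map (Lg (g * h) : (Fin n → 𝔽) →ₗ[𝔽] (Fin n → 𝔽)) = (A.map (Lg h : (Fin n → 𝔽) →ₗ[𝔽] (Fin n → 𝔽))).map (Lg g : (Fin n → 𝔽) →ₗ[𝔽] (Fin n → 𝔽)) := by
  ext y
  simp only [Submodule.mem_map]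
  constructor
  · rintro ⟨x, hx, rfl⟩
    exact ⟨Lg h x, ⟨x, hx, rfl⟩, by simp [Lg_apply, mulVec_mulVec, Units.val_mul]⟩
  · rintro ⟨-, ⟨x, hx, rfl⟩, rfl⟩
    exact ⟨x, hx, by simp [Lg_apply, mulVec_mulVec, Units.val_mul]⟩

/-- The coordinate subspace supported on a finset of indices. -/
def Dm (s : Finset (Fin n)) : Submodule 𝔽 (Fin n → 𝔽) where
  carrier := {x | ∀ k, k ∉ s → x k = 0}
  add_mem' := by intro a b ha hb k hk; simp [ha k hk, hb k hk]
  zero_mem' := by intro k _; rfl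
  smul_mem' := by intro c x hx k hk; simp [hx k hk]

lemma mem_Dm {s : Finset (Fin n)} {x : Fin n → 𝔽} : x ∈ Dm s ↔ ∀ k, k ∉ s → x k = 0 :=
  Iff.rfl

lemma Dm_mono {s t : Finset (Fin n)} (h : s ⊆ t) : (Dm s : Submodule 𝔽 (Fin n → 𝔽)) ≤ Dm t :=
  fun x hx k hk => hx k (fun hks => hk (h hks))

lemma Dm_inf (s t : Finset (Fin n)) :
    (Dm s ⊓ Dm t : Submodule 𝔽 (Fin n → 𝔽)) = Dm (s ∩ t) := by
  ext x
  constructor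
  · rintro ⟨h1, h2⟩ k hk
    by_cases hks : k ∈ s
    · exact h2 k (fun ht => hk (Finset.mem_inter.2 ⟨hks, ht⟩))
    · exact h1 k hks
  · intro h
    exact ⟨fun k hk => h k (fun hi => hk (Finset.mem_inter.1 hi).1),
           fun k hk => h k (fun hi => hk (Finset.mem_inter.1 hi).2)⟩

/-- `Dm s` is spanned by the coordinate vectors indexed by `s`. -/
lemma Dm_eq_span (s : Finset (Fin n)) :
    (Dm s : Submodule 𝔽 (Fin n → 𝔽)) = Submodule.span 𝔽 ((fun k => Pi.single k (1:𝔽)) '' s) := by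
  apply le_antisymm
  · intro x hx
    have : x = ∑ k ∈ s, x k • (Pi.single k 1 : Fin n → 𝔽) := by
      funext m
      by_cases hm : m ∈ s
      · rw [Finset.sum_apply]
        rw [Finset.sum_eq_single m]
        · simp
        · intro b _ hb; simp [Pi.single_apply, hb]
        · intro h; exact absurd hm h
      · rw [Finset.sum_apply]
        rw [Finset.sum_eq_zero, hx m hm]
        intro b hb
        have : b ≠ m := fun h => hm (h ▸ hb)
        simp [Pi.single_apply, this]
    rw [this]
    exact Submodule.sum_mem _ (fun k hk => Submodule.smul_mem _ _
      (Submodule.subset_span ⟨k, by simpa using hk, rfl⟩))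
  · rw [Submodule.span_le]
    rintro - ⟨k, hk, rfl⟩
    intro m hm
    have : k ≠ m := fun h => hm (h ▸ (by simpa using hk))
    simp [Pi.single_apply, Ne.symm this]

noncomputable def DmEquiv (s : Finset (Fin n)) : (Dm s : Submodule 𝔽 (Fin n → 𝔽)) ≃ₗ[𝔽] (s → 𝔽) where
  toFun x := fun k => x.1 k.1
  map_add' := by intros; rfl
  map_smul' := by intros; rfl
  invFun f := ⟨fun k => if h : k ∈ s then f ⟨k, h⟩ else 0, by
    intro k hk; simp [hk]⟩
  left_inv := by
    rintro ⟨x, hx⟩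
    ext k
    by_cases h : k ∈ s
    · simp [h]
    · simp [h, (hx k h).symm]
  right_inv := by
    intro f; ext k; simp [k.2]

lemma finrank_Dm (s : Finset (Fin n)) :
    Module.finrank 𝔽 (Dm s : Submodule 𝔽 (Fin n → 𝔽)) = s.card := by
  rw [LinearEquiv.finrank_eq (DmEquiv s)]
  simp [Module.finrank_pi]

lemma Dm_eq_bot_iff (s : Finset (Fin n)) :
    (Dm s : Submodule 𝔽 (Fin n → 𝔽)) = ⊥ ↔ s = ∅ := by
  constructor
  · intro h
    by_contra hs
    obtain ⟨k, hk⟩ := Finset.nonempty_iff_ne_empty.2 hs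
    have : (Pi.single k (1:𝔽)) ∈ (Dm s : Submodule 𝔽 (Fin n → 𝔽)) := by
      intro m hm
      have : k ≠ m := fun he => hm (he ▸ hk)
      simp [Pi.single_apply, Ne.symm this]
    rw [h] at this
    simpa using congrFun (Submodule.mem_bot 𝔽 |>.1 this) k
  · rintro rfl
    ext x
    simp only [mem_Dm, Submodule.mem_bot]
    constructor
    · intro h; funext k; exact h k (by simp)
    · rintro rfl; intro k _; rfl

end Prelim
section CFlag
variable {𝔽 : Type*} [Field 𝔽] {n : ℕ}

/-- standard coordinate flag -/
def Cfl (𝔽 : Type*) [Field 𝔽] (n : ℕ) (i : ℕ) : Submodule 𝔽 (Fin n → 𝔽) :=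
  Dm (Finset.univ.filter (fun k : Fin n => (k : ℕ) < i))

lemma mem_Cfl {i : ℕ} {x : Fin n → 𝔽} : x ∈ Cfl 𝔽 n i ↔ ∀ k : Fin n, i ≤ (k : ℕ) → x k = 0 := by
  simp only [Cfl, mem_Dm, Finset.mem_filter, Finset.mem_univ, true_and, not_lt]

lemma Cfl_zero : Cfl 𝔽 n 0 = ⊥ := by
  rw [Cfl, Dm_eq_bot_iff]
  ext k; simp

lemma Cfl_top {i : ℕ} (h : n ≤ i) : Cfl 𝔽 n i = ⊤ := by
  ext x
  simp only [mem_Cfl, Submodule.mem_top, iff_true]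
  intro k hk
  exact absurd (lt_of_lt_of_le k.2 (le_trans h hk)) (lt_irrefl _)

lemma Cfl_mono {i j : ℕ} (h : i ≤ j) : Cfl 𝔽 n i ≤ Cfl 𝔽 n j :=
  Dm_mono (by intro k; simp only [Finset.mem_filter, Finset.mem_univ, true_and]; omega)

lemma card_filter_lt (n i : ℕ) :
    (Finset.univ.filter (fun k : Fin n => (k : ℕ) < i)).card = min i n := by
  rw [← Fintype.card_subtype]
  have e : {k : Fin n // (k : ℕ) < i} ≃ Fin (min i n) :=
    { toFun := fun k => ⟨k.1, by have := k.1.2; have := k.2; omega⟩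
      invFun := fun m => ⟨⟨m.1, lt_of_lt_of_le m.2 (min_le_right i n)⟩,
        lt_of_lt_of_le m.2 (min_le_left i n)⟩
      left_inv := fun k => by ext; rfl
      right_inv := fun m => by ext; rfl }
  rw [Fintype.card_congr e, Fintype.card_fin]

lemma finrank_Cfl {i : ℕ} (h : i ≤ n) : Module.finrank 𝔽 (Cfl 𝔽 n i) = i := by
  rw [Cfl, finrank_Dm, card_filter_lt, min_eq_left h]

/-- upper triangular invertible matrices map the coordinate flag into itself -/
lemma triangular_maps_Cfl {A : Matrix (Fin n) (Fin n) 𝔽} (hA : A.BlockTriangular id)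
    {i : ℕ} : (Cfl 𝔽 n i).map (mulVecLin A) ≤ Cfl 𝔽 n i := by
  rintro - ⟨x, hx, rfl⟩
  rw [mem_Cfl]
  intro k hk
  simp only [mulVecLin_apply, mulVec, dotProduct]
  apply Finset.sum_eq_zero
  intro m _
  by_cases hm : (m : ℕ) < i
  · have : (id m : Fin n) < id k := by
      simp only [id]
      exact Fin.lt_def.2 (lt_of_lt_of_le hm hk)
    rw [hA this, zero_mul]
  · rw [mem_Cfl.1 hx m (by omega), mul_zero]

lemma borel_maps_Cfl {b : GL (Fin n) 𝔽} (hb : b ∈ BorelGL 𝔽 n) (i : ℕ) :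
    (Cfl 𝔽 n i).map (Lg b : (Fin n → 𝔽) →ₗ[𝔽] (Fin n → 𝔽)) = Cfl 𝔽 n i := by
  apply le_antisymm
  · exact triangular_maps_Cfl hb
  · intro x hx
    have hb' : ((b⁻¹ : GL (Fin n) 𝔽) : Matrix (Fin n) (Fin n) 𝔽).BlockTriangular id :=
      (BorelGL 𝔽 n).inv_mem hb
    refine ⟨Lg b⁻¹ x, triangular_maps_Cfl hb' ⟨x, hx, rfl⟩, ?_⟩
    have : Lg b (Lg b⁻¹ x) = x := by
      simp only [Lg_apply, mulVec_mulVec]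
      norm_cast
      rw [mul_inv_cancel]
      simp
    exact this

/-- a GL element fixing the full coordinate flag is upper triangular -/
lemma mem_borel_of_fixes_Cfl {h : GL (Fin n) 𝔽}
    (hh : ∀ i, i ≤ n → (Cfl 𝔽 n i).map (Lg h : (Fin n → 𝔽) →ₗ[𝔽] (Fin n → 𝔽)) = Cfl 𝔽 n i) : h ∈ BorelGL 𝔽 n := by
  intro i j hij
  simp only [id] at hij
  -- column j of h lies in Cfl (j+1)
  have hcol : (Lg h) (Pi.single j 1) ∈ Cfl 𝔽 n ((j : ℕ)+1) := by
    rw [← hh ((j:ℕ)+1) (by omega)]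
    refine ⟨Pi.single j 1, ?_, rfl⟩
    rw [SetLike.mem_coe, mem_Cfl]
    intro k hk
    have : j ≠ k := by intro he; subst he; omega
    simp [Pi.single_apply, this]
  have := mem_Cfl.1 hcol i (by exact_mod_cast hij)
  simpa [Lg_apply, mulVec_single] using this

end CFlag
section Flags
variable {𝔽 : Type*} [Field 𝔽] {n : ℕ}

lemma finrank_map_Lg (g : GL (Fin n) 𝔽) (p : Submodule 𝔽 (Fin n → 𝔽)) :
    Module.finrank 𝔽 (p.map (Lg g : (Fin n → 𝔽) →ₗ[𝔽] (Fin n → 𝔽))) = Module.finrank 𝔽 p := by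
  rw [show p.map (Lg g : (Fin n → 𝔽) →ₗ[𝔽] (Fin n → 𝔽)) = p.map ((Lg g : (Fin n → 𝔽) →ₗ[𝔽] (Fin n → 𝔽))) from rfl]
  rw [LinearEquiv.finrank_map_eq]

/-- The flag attached to a coset in `G/B`. -/
noncomputable def Fl (x : GL (Fin n) 𝔽 ⧸ BorelGL 𝔽 n) (i : ℕ) : Submodule 𝔽 (Fin n → 𝔽) :=
  Quotient.liftOn' x (fun g => (Cfl 𝔽 n i).map (Lg g : (Fin n → 𝔽) →ₗ[𝔽] (Fin n → 𝔽))) (by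
    intro g g' hgg'
    have hb : g⁻¹ * g' ∈ BorelGL 𝔽 n := QuotientGroup.leftRel_apply.1 hgg'
    show (Cfl 𝔽 n i).map (Lg g : (Fin n → 𝔽) →ₗ[𝔽] (Fin n → 𝔽)) = (Cfl 𝔽 n i).map (Lg g' : (Fin n → 𝔽) →ₗ[𝔽] (Fin n → 𝔽))
    have hg' : g' = g * (g⁻¹ * g') := by group
    conv_rhs => rw [hg']
    rw [Lg_mul, borel_maps_Cfl hb])

lemma Fl_mk (g : GL (Fin n) 𝔽) (i : ℕ) :
    Fl (QuotientGroup.mk g : GL (Fin n) 𝔽 ⧸ BorelGL 𝔽 n) i = (Cfl 𝔽 n i).map (Lg g : (Fin n → 𝔽) →ₗ[𝔽] (Fin n → 𝔽)) := rfl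

lemma Fl_smul (g : GL (Fin n) 𝔽) (x : GL (Fin n) 𝔽 ⧸ BorelGL 𝔽 n) (i : ℕ) :
    Fl (g • x) i = (Fl x i).map (Lg g : (Fin n → 𝔽) →ₗ[𝔽] (Fin n → 𝔽)) := by
  induction x using QuotientGroup.induction_on with
  | H k =>
    rw [show g • (QuotientGroup.mk k : GL (Fin n) 𝔽 ⧸ BorelGL 𝔽 n) = QuotientGroup.mk (g * k)
      from MulAction.Quotient.smul_mk _ g k]
    rw [Fl_mk, Fl_mk, Lg_mul]

lemma Fl_top (x : GL (Fin n) 𝔽 ⧸ BorelGL 𝔽 n) {i : ℕ} (h : n ≤ i) : Fl x i = ⊤ := by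
  induction x using QuotientGroup.induction_on with
  | H k =>
    rw [Fl_mk, Cfl_top h, Submodule.map_top, LinearEquiv.range]

lemma Fl_zero (x : GL (Fin n) 𝔽 ⧸ BorelGL 𝔽 n) : Fl x 0 = ⊥ := by
  induction x using QuotientGroup.induction_on with
  | H k => rw [Fl_mk, Cfl_zero, Submodule.map_bot]

lemma Fl_mono (x : GL (Fin n) 𝔽 ⧸ BorelGL 𝔽 n) {i j : ℕ} (h : i ≤ j) : Fl x i ≤ Fl x j := by
  induction x using QuotientGroup.induction_on with
  | H k => exact Submodule.map_mono (Cfl_mono h)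

lemma finrank_Fl (x : GL (Fin n) 𝔽 ⧸ BorelGL 𝔽 n) {i : ℕ} (h : i ≤ n) :
    Module.finrank 𝔽 (Fl x i) = i := by
  induction x using QuotientGroup.induction_on with
  | H k =>
    rw [Fl_mk]
    rw [show (Cfl 𝔽 n i).map (Lg k : (Fin n → 𝔽) →ₗ[𝔽] (Fin n → 𝔽)) = (Cfl 𝔽 n i).map ((Lg k : (Fin n → 𝔽) →ₗ[𝔽] (Fin n → 𝔽))) from rfl]
    rw [LinearEquiv.finrank_map_eq, finrank_Cfl h]

lemma Fl_inj {x y : GL (Fin n) 𝔽 ⧸ BorelGL 𝔽 n} (h : ∀ i, i ≤ n → Fl x i = Fl y i) :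
    x = y := by
  induction x using QuotientGroup.induction_on with
  | H g =>
    induction y using QuotientGroup.induction_on with
    | H g' =>
      rw [QuotientGroup.eq]
      apply mem_borel_of_fixes_Cfl
      intro i hi
      have hfix := h i hi
      rw [Fl_mk, Fl_mk] at hfix
      -- (Cfl i).map (Lg g' : (Fin n → 𝔽) →ₗ[𝔽] (Fin n → 𝔽)) = (Cfl i).map (Lg g : (Fin n → 𝔽) →ₗ[𝔽] (Fin n → 𝔽))  →  (Cfl i).map (Lg (g⁻¹ * g') : (Fin n → 𝔽) →ₗ[𝔽] (Fin n → 𝔽)) = Cfl i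
      have : (Cfl 𝔽 n i).map (Lg (g⁻¹ * g') : (Fin n → 𝔽) →ₗ[𝔽] (Fin n → 𝔽)) = ((Cfl 𝔽 n i).map (Lg g' : (Fin n → 𝔽) →ₗ[𝔽] (Fin n → 𝔽))).map (Lg g⁻¹ : (Fin n → 𝔽) →ₗ[𝔽] (Fin n → 𝔽)) :=
        Lg_mul g⁻¹ g' _
    
      rw [this, ← hfix, ← Lg_mul, inv_mul_cancel]
      have hone : (Lg (1 : GL (Fin n) 𝔽) : (Fin n → 𝔽) → (Fin n → 𝔽)) = id := by
        funext v; simp [Lg_apply, Units.val_one]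
      ext v
      simp only [Submodule.mem_map]
      constructor
      · rintro ⟨w, hw, rfl⟩
        simpa [Lg_apply, Units.val_one] using hw
      · intro hv
        exact ⟨v, hv, by simp [Lg_apply, Units.val_one]⟩
end Flags
section Ranks
variable {𝔽 : Type*} [Field 𝔽] {n : ℕ}

local notation "X" => GL (Fin n) 𝔽 ⧸ BorelGL 𝔽 n

noncomputable def rk (x : X) (i j : ℕ) : ℕ :=
  Module.finrank 𝔽 (Fl x i ⊓ Cfl 𝔽 n j : Submodule 𝔽 (Fin n → 𝔽))

lemma rk_mono_j (x : X) (i : ℕ) {j j' : ℕ} (h : j ≤ j') : rk x i j ≤ rk x i j' :=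
  Submodule.finrank_mono (inf_le_inf_left _ (Cfl_mono h))

lemma rk_zero (x : X) (j : ℕ) : rk x 0 j = 0 := by
  rw [rk, Fl_zero, bot_inf_eq, Submodule.finrank_eq_zero.2 rfl]

/-- general submodular bound -/
lemma finrank_inf_le_aux (A B B' : Submodule 𝔽 (Fin n → 𝔽)) (h : B' ≤ B) :
    Module.finrank 𝔽 (A ⊓ B : Submodule 𝔽 (Fin n → 𝔽)) + Module.finrank 𝔽 B'
      ≤ Module.finrank 𝔽 B + Module.finrank 𝔽 (A ⊓ B' : Submodule 𝔽 (Fin n → 𝔽)) := by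
  have h1 := Submodule.finrank_sup_add_finrank_inf_eq (A ⊓ B) B'
  have h2 : (A ⊓ B) ⊓ B' = A ⊓ B' := by
    rw [inf_assoc, inf_eq_right.2 h]
  have h3 : Module.finrank 𝔽 ((A ⊓ B) ⊔ B' : Submodule 𝔽 (Fin n → 𝔽))
      ≤ Module.finrank 𝔽 B :=
    Submodule.finrank_mono (sup_le inf_le_right h)
  rw [h2] at h1
  omega

lemma finrank_Cfl' (j : ℕ) : Module.finrank 𝔽 (Cfl 𝔽 n j) = min j n := by
  rcases le_total j n with h | h
  · rw [finrank_Cfl h, min_eq_left h]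
  · rw [Cfl_top h, min_eq_right h]
    simpa using Module.finrank_pi 𝔽 (ι := Fin n)

lemma rk_col_step (x : X) (i : ℕ) {j : ℕ} (hj : 1 ≤ j) :
    rk x i j ≤ rk x i (j-1) + 1 := by
  have := finrank_inf_le_aux (Fl x i) (Cfl 𝔽 n j) (Cfl 𝔽 n (j-1)) (Cfl_mono (by omega))
  rw [finrank_Cfl', finrank_Cfl'] at this
  have := this
  rw [rk, rk]
  omega

/-- the depth at which level `i` of the flag enters, relative to the standard flag -/
lemma dd_exists (x : X) (i : ℕ) : ∃ j, Fl x i ≤ Fl x (i-1) ⊔ Cfl 𝔽 n j :=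
  ⟨n, by rw [Cfl_top le_rfl]; exact le_trans le_top le_sup_right⟩

noncomputable def dd (x : X) (i : ℕ) : ℕ := Nat.find (dd_exists x i)

lemma dd_spec (x : X) (i : ℕ) : Fl x i ≤ Fl x (i-1) ⊔ Cfl 𝔽 n (dd x i) :=
  Nat.find_spec (dd_exists x i)

lemma dd_le (x : X) {i j : ℕ} (h : Fl x i ≤ Fl x (i-1) ⊔ Cfl 𝔽 n j) : dd x i ≤ j :=
  Nat.find_le h

lemma dd_min (x : X) {i j : ℕ} (h : j < dd x i) : ¬ Fl x i ≤ Fl x (i-1) ⊔ Cfl 𝔽 n j :=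
  Nat.find_min _ h

lemma dd_spec' (x : X) {i j : ℕ} (h : dd x i ≤ j) : Fl x i ≤ Fl x (i-1) ⊔ Cfl 𝔽 n j :=
  le_trans (dd_spec x i) (sup_le_sup_left (Cfl_mono h) _)

lemma dd_le_n (x : X) (i : ℕ) : dd x i ≤ n :=
  dd_le x (by rw [Cfl_top le_rfl]; exact le_trans le_top le_sup_right)

lemma dd_pos (x : X) {i : ℕ} (h1 : 1 ≤ i) (h2 : i ≤ n) : 1 ≤ dd x i := by
  by_contra h
  push_neg at h
  have hdd : dd x i = 0 := by omega
  have := dd_spec x i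
  rw [hdd, Cfl_zero, sup_bot_eq] at this
  have hle := Submodule.finrank_mono this
  rw [finrank_Fl x h2, finrank_Fl x (by omega)] at hle
  omega

/-- jump formula -/
lemma rk_jump (x : X) {i : ℕ} (h1 : 1 ≤ i) (h2 : i ≤ n) (j : ℕ) :
    rk x i j = rk x (i-1) j + (if dd x i ≤ j then 1 else 0) := by
  by_cases hd : dd x i ≤ j
  · rw [if_pos hd]
    have hle : Fl x i ≤ Fl x (i-1) ⊔ Cfl 𝔽 n j := dd_spec' x hd
    have hmod : (Fl x i ⊓ Cfl 𝔽 n j) ⊔ Fl x (i-1) = Fl x i := by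
      rw [inf_sup_assoc_of_le _ (Fl_mono x (by omega))]
      exact inf_eq_left.2 (le_trans hle (by rw [sup_comm]))
    have hfr := Submodule.finrank_sup_add_finrank_inf_eq (Fl x i ⊓ Cfl 𝔽 n j) (Fl x (i-1))
    rw [hmod] at hfr
    have hinf : (Fl x i ⊓ Cfl 𝔽 n j) ⊓ Fl x (i-1) = Fl x (i-1) ⊓ Cfl 𝔽 n j := by
      rw [inf_comm (Fl x i) (Cfl 𝔽 n j), inf_assoc, inf_eq_right.2 (Fl_mono x (by omega)),
        inf_comm]
    rw [hinf, finrank_Fl x h2, finrank_Fl x (by omega)] at hfr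
    rw [rk, rk]
    omega
  · rw [if_neg hd]
    push_neg at hd
    have hnle := dd_min x hd
    apply le_antisymm
    · -- Fl x i ⊓ C j ≤ Fl x (i-1)
      have hsub : Fl x i ⊓ Cfl 𝔽 n j ≤ Fl x (i-1) ⊓ Cfl 𝔽 n j := by
        refine le_inf ?_ inf_le_right
        intro v hv
        by_contra hv'
        have hvFl : v ∈ Fl x i := hv.1
        have hA : Fl x (i-1) ⊔ (𝔽 ∙ v) ≤ Fl x i :=
          sup_le (Fl_mono x (by omega)) ((Submodule.span_singleton_le_iff_mem v _).2 hvFl)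
        have hbot : Fl x (i-1) ⊓ (𝔽 ∙ v) = ⊥ := by
          rw [eq_bot_iff]
          rintro w ⟨hw1, hw2⟩
          obtain ⟨c, rfl⟩ := Submodule.mem_span_singleton.1 hw2
          rcases eq_or_ne c 0 with rfl | hc
          · simp
          · exfalso
            apply hv'
            have := Submodule.smul_mem (Fl x (i-1)) c⁻¹ hw1
            rwa [smul_smul, inv_mul_cancel₀ hc, one_smul] at this
        have hfrA : Module.finrank 𝔽 (Fl x (i-1) ⊔ (𝔽 ∙ v) : Submodule 𝔽 (Fin n → 𝔽)) = i := by
          have := Submodule.finrank_sup_add_finrank_inf_eq (Fl x (i-1)) (𝔽 ∙ v)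
          rw [hbot, finrank_Fl x (by omega)] at this
          have hv0 : v ≠ 0 := by rintro rfl; exact hv' (Submodule.zero_mem _)
          rw [finrank_span_singleton hv0, finrank_bot] at this
          omega
        have : Fl x (i-1) ⊔ (𝔽 ∙ v) = Fl x i :=
          Submodule.eq_of_le_of_finrank_le hA (by rw [hfrA, finrank_Fl x h2])
        apply hnle
        rw [← this]
        exact sup_le_sup_left ((Submodule.span_singleton_le_iff_mem v _).2 hv.2) _
      exact Submodule.finrank_mono hsub
    · exact Submodule.finrank_mono (inf_le_inf_right _ (Fl_mono x (by omega)))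

lemma dd_strict (x : X) {i : ℕ} (h1 : 1 ≤ i) (h2 : i ≤ n - 1) :
    dd x i ≠ dd x (i+1) := by
  intro heq
  have hn2 : 2 ≤ n := by omega
  have hin : i ≤ n := by omega
  have hin1 : i + 1 ≤ n := by omega
  set j := dd x i with hj
  have hj1 : 1 ≤ j := dd_pos x h1 hin
  have e1 := rk_jump x h1 hin j
  have e2 := rk_jump x (by omega : 1 ≤ i+1) hin1 j
  simp only [Nat.add_sub_cancel] at e2
  rw [if_pos le_rfl] at e1
  rw [if_pos (by omega)] at e2
  have e3 := rk_jump x h1 hin (j-1)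
  have e4 := rk_jump x (by omega : 1 ≤ i+1) hin1 (j-1)
  simp only [Nat.add_sub_cancel] at e4
  rw [if_neg (by omega)] at e3
  rw [if_neg (by omega)] at e4
  have e5 := rk_col_step x (i+1) hj1
  have e6 := rk_mono_j x (i-1) (by omega : j - 1 ≤ j)
  omega

/-- telescoping -/
lemma rk_telescope (x : X) (j : ℕ) : ∀ i, i ≤ n →
    rk x i j = ((Finset.Icc 1 i).filter (fun k => dd x k ≤ j)).card := by
  intro i
  induction i with
  | zero => intro _; simp [rk_zero]
  | succ m ih =>
    intro hm
    have : Finset.Icc 1 (m+1) = insert (m+1) (Finset.Icc 1 m) := by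
      ext k; simp only [Finset.mem_Icc, Finset.mem_insert]; omega
    rw [this, Finset.filter_insert]
    have hjump := rk_jump x (by omega : 1 ≤ m+1) hm j
    simp only [Nat.add_sub_cancel] at hjump
    by_cases hd : dd x (m+1) ≤ j
    · rw [if_pos hd, Finset.card_insert_of_notMem (by simp), ← ih (by omega)]
      rw [hjump, if_pos hd]
    · rw [if_neg hd, ← ih (by omega), hjump, if_neg hd]
      omega
end Ranks
section Straighten
variable {𝔽 : Type*} [Field 𝔽] {n : ℕ}

local notation "X" => GL (Fin n) 𝔽 ⧸ BorelGL 𝔽 n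

/-- neighbor relation: flags agree except possibly at level `i` -/
def nbr (i : ℕ) (x x' : X) : Prop := ∀ k, k ≤ n → k ≠ i → Fl x' k = Fl x k

lemma nbr_refl (i : ℕ) (x : X) : nbr i x x := fun _ _ _ => rfl

lemma nbr_symm {i : ℕ} {x x' : X} (h : nbr i x x') : nbr i x' x :=
  fun k hk hki => (h k hk hki).symm

lemma nbr_trans {i : ℕ} {x y z : X} (h : nbr i x y) (h' : nbr i y z) : nbr i x z :=
  fun k hk hki => (h' k hk hki).trans (h k hk hki)

/-- statistic for the straightening induction -/
noncomputable def Mstat (x : X) : ℕ :=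
  ∑ k ∈ Finset.Icc 1 n, ∑ j ∈ Finset.Icc 1 n, rk x k j

lemma dd_nbr_ge {i : ℕ} (h1 : 1 ≤ i) (h2 : i ≤ n - 1) {x x' : X}
    (hnb : nbr i x x') (hne : Fl x' i ≠ Fl x i) (hasc : dd x i < dd x (i+1)) :
    dd x (i+1) ≤ dd x' i := by
  by_contra hcon
  push_neg at hcon
  set jj := dd x' i with hjj
  have hin : i ≤ n := by omega
  have hin1 : i + 1 ≤ n := by omega
  have hflip : Fl x' (i-1) = Fl x (i-1) := hnb (i-1) (by omega) (by omega)
  have hflip1 : Fl x' (i+1) = Fl x (i+1) := hnb (i+1) (by omega) (by omega)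
  have hK1 : Fl x' i ≤ Fl x (i+1) := by
    rw [← hflip1]; exact Fl_mono x' (by omega)
  have hK2 : Fl x' i ≤ Fl x (i-1) ⊔ Cfl 𝔽 n jj := by
    have := dd_spec x' i
    rwa [hflip] at this
  set K : Submodule 𝔽 (Fin n → 𝔽) := Fl x (i+1) ⊓ (Fl x (i-1) ⊔ Cfl 𝔽 n jj) with hK
  -- finrank of K
  have hmod : K = (Fl x (i+1) ⊓ Cfl 𝔽 n jj) ⊔ Fl x (i-1) := by
    rw [inf_sup_assoc_of_le _ (Fl_mono x (by omega : i - 1 ≤ i + 1))]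
    rw [hK, sup_comm]
  have hinf : (Fl x (i+1) ⊓ Cfl 𝔽 n jj) ⊓ Fl x (i-1) = Fl x (i-1) ⊓ Cfl 𝔽 n jj := by
    rw [inf_comm (Fl x (i+1)) (Cfl 𝔽 n jj), inf_assoc,
      inf_eq_right.2 (Fl_mono x (by omega : i - 1 ≤ i + 1)), inf_comm]
  have hfr := Submodule.finrank_sup_add_finrank_inf_eq (Fl x (i+1) ⊓ Cfl 𝔽 n jj) (Fl x (i-1))
  rw [hinf, ← hmod, finrank_Fl x (by omega : i - 1 ≤ n)] at hfr
  -- hfr : fr K + rk x (i-1) jj = rk x (i+1) jj + (i-1)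
  have e2 := rk_jump x (by omega : 1 ≤ i+1) hin1 jj
  simp only [Nat.add_sub_cancel] at e2
  rw [if_neg (by omega)] at e2
  have e1 := rk_jump x h1 hin jj
  by_cases hcase : dd x i ≤ jj
  · -- fr K = i, and both Fl x i and Fl x' i equal K
    rw [if_pos hcase] at e1
    have hfrK : Module.finrank 𝔽 K = i := by
      simp only [rk] at hfr e1 e2
      omega
    have hxK : Fl x i = K := by
      apply Submodule.eq_of_le_of_finrank_le
      · exact le_inf (Fl_mono x (by omega)) (dd_spec' x hcase)
      · rw [hfrK, finrank_Fl x hin]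
    have hx'K : Fl x' i = K := by
      apply Submodule.eq_of_le_of_finrank_le
      · exact le_inf hK1 hK2
      · rw [hfrK]
        have : Module.finrank 𝔽 (Fl x' i) = i := finrank_Fl x' hin
        omega
    exact hne (hx'K.trans hxK.symm)
  · -- fr K = i - 1 < i, contradiction with Fl x' i ≤ K
    rw [if_neg hcase] at e1
    have hfrK : Module.finrank 𝔽 K = i - 1 := by
      simp only [rk] at hfr e1 e2
      omega
    have hle := Submodule.finrank_mono (le_inf hK1 hK2 : Fl x' i ≤ K)
    rw [finrank_Fl x' hin, hfrK] at hle
    omega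

lemma sum_ite_Icc (a : ℕ) (ha : 1 ≤ a) :
    (∑ j ∈ Finset.Icc 1 n, (if a ≤ j then 1 else 0)) = n + 1 - a := by
  rw [← Finset.card_filter]
  have : (Finset.Icc 1 n).filter (fun j => a ≤ j) = Finset.Icc a n := by
    ext j; simp only [Finset.mem_filter, Finset.mem_Icc]; omega
  rw [this, Nat.card_Icc]

lemma nbr_M_lt {i : ℕ} (h1 : 1 ≤ i) (h2 : i ≤ n - 1) {x x' : X}
    (hnb : nbr i x x') (hne : Fl x' i ≠ Fl x i) (hasc : dd x i < dd x (i+1)) :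
    Mstat x' < Mstat x := by
  have hin : i ≤ n := by omega
  have hdge := dd_nbr_ge h1 h2 hnb hne hasc
  apply Finset.sum_lt_sum
  · intro k hk
    by_cases hki : k = i
    · rw [hki]
      -- row i comparison
      apply Finset.sum_le_sum
      intro j _
      have hflip : Fl x' (i-1) = Fl x (i-1) := hnb (i-1) (by omega) (by omega)
      have ej' := rk_jump x' h1 hin j
      have ej := rk_jump x h1 hin j
      have hr : rk x' (i-1) j = rk x (i-1) j := by rw [rk, rk, hflip]
      rw [ej', ej, hr]
      by_cases hc : dd x' i ≤ j
      · rw [if_pos hc, if_pos (by omega)]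
      · rw [if_neg hc]
        omega
    · -- rows agree
      apply le_of_eq
      apply Finset.sum_congr rfl
      intro j _
      rw [rk, rk, hnb k (Finset.mem_Icc.1 hk).2 hki]
  · refine ⟨i, Finset.mem_Icc.2 ⟨h1, hin⟩, ?_⟩
    -- strict at row i
    have hflip : Fl x' (i-1) = Fl x (i-1) := hnb (i-1) (by omega) (by omega)
    have hb1 : ∀ j ∈ Finset.Icc 1 n, rk x' i j ≤ rk x (i-1) j + (if dd x (i+1) ≤ j then 1 else 0) := by
      intro j _
      have ej' := rk_jump x' h1 hin j
      have hr : rk x' (i-1) j = rk x (i-1) j := by rw [rk, rk, hflip]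
      rw [ej', hr]
      by_cases hc : dd x' i ≤ j
      · rw [if_pos hc, if_pos (by omega)]
      · rw [if_neg hc]; omega
    have hb2 : ∀ j ∈ Finset.Icc 1 n, rk x i j = rk x (i-1) j + (if dd x i ≤ j then 1 else 0) :=
      fun j _ => rk_jump x h1 hin j
    calc ∑ j ∈ Finset.Icc 1 n, rk x' i j
        ≤ ∑ j ∈ Finset.Icc 1 n, (rk x (i-1) j + (if dd x (i+1) ≤ j then 1 else 0)) :=
          Finset.sum_le_sum hb1
      _ = ∑ j ∈ Finset.Icc 1 n, rk x (i-1) j + (n + 1 - dd x (i+1)) := by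
          rw [Finset.sum_add_distrib, sum_ite_Icc _ (by have := dd_pos x h1 hin; omega)]
      _ < ∑ j ∈ Finset.Icc 1 n, rk x (i-1) j + (n + 1 - dd x i) := by
          have hd1 := dd_pos x h1 hin
          have hdn := dd_le_n x (i+1)
          omega
      _ = ∑ j ∈ Finset.Icc 1 n, rk x i j := by
          rw [Finset.sum_congr rfl hb2, Finset.sum_add_distrib,
            sum_ite_Icc _ (dd_pos x h1 hin)]

/-- opposite (big cell relative to the standard flag) -/
def OppC (x : X) : Prop := ∀ i, 1 ≤ i → i ≤ n - 1 → Fl x i ⊓ Cfl 𝔽 n (n - i) = ⊥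

lemma opp_of_no_ascent {x : X} (h : ∀ i, 1 ≤ i → i ≤ n - 1 → dd x (i+1) ≤ dd x i) :
    OppC x := by
  have hstrict : ∀ i, 1 ≤ i → i ≤ n - 1 → dd x (i+1) < dd x i := by
    intro i hi1 hi2
    exact lt_of_le_of_ne (h i hi1 hi2) (Ne.symm (dd_strict x hi1 hi2))
  have hlow : ∀ m k, 1 ≤ k → k ≤ n → n - k ≤ m → n + 1 - k ≤ dd x k := by
    intro m
    induction m with
    | zero =>
      intro k hk1 hk2 hk3
      have : k = n := by omega
      subst this
      have := dd_pos x hk1 hk2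
      omega
    | succ m ih =>
      intro k hk1 hk2 hk3
      rcases eq_or_lt_of_le hk2 with rfl | hlt
      · have := dd_pos x hk1 le_rfl; omega
      · have hk2' : k ≤ n - 1 := by omega
        have := hstrict k hk1 hk2'
        have := ih (k+1) (by omega) (by omega) (by omega)
        omega
  intro i hi1 hi2
  have hrk : rk x i (n - i) = 0 := by
    rw [rk_telescope x (n-i) i (by omega)]
    rw [Finset.card_eq_zero, Finset.filter_eq_empty_iff]
    intro k hk
    have hk' := Finset.mem_Icc.1 hk
    have := hlow (n - k) k (by omega) (by omega) le_rfl
    omega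
  rw [rk] at hrk
  exact Submodule.finrank_eq_zero.1 hrk

lemma not_opp_ascent {x : X} (h : ¬ OppC x) :
    ∃ i, 1 ≤ i ∧ i ≤ n - 1 ∧ dd x i < dd x (i+1) := by
  by_contra hc
  push_neg at hc
  exact h (opp_of_no_ascent (fun i hi1 hi2 => hc i hi1 hi2))
end Straighten
section Zmod
variable {𝔽 : Type*} [Field 𝔽] [Fintype 𝔽] {n : ℕ}

local notation "X" => GL (Fin n) 𝔽 ⧸ BorelGL 𝔽 n

noncomputable instance fintypeGL : Fintype (GL (Fin n) 𝔽) := by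
  classical exact Fintype.ofFinite _

noncomputable instance fintypeX : Fintype (GL (Fin n) 𝔽 ⧸ BorelGL 𝔽 n) := by
  classical exact Fintype.ofFinite _

/-- the space of harmonic functions -/
noncomputable def Zmod (𝔽 : Type*) [Field 𝔽] [Fintype 𝔽] (n : ℕ) :
    Submodule ℂ ((GL (Fin n) 𝔽 ⧸ BorelGL 𝔽 n) → ℂ) where
  carrier := {f | ∀ i, 1 ≤ i → i ≤ n - 1 → ∀ x : GL (Fin n) 𝔽 ⧸ BorelGL 𝔽 n,
    ∑ x' ∈ Finset.univ.filter (nbr i x), f x' = 0}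
  add_mem' := by
    intro f g hf hg i h1 h2 x
    simp only [Pi.add_apply]
    rw [Finset.sum_add_distrib, hf i h1 h2 x, hg i h1 h2 x, add_zero]
  zero_mem' := by intro i h1 h2 x; simp
  smul_mem' := by
    intro c f hf i h1 h2 x
    simp only [Pi.smul_apply, smul_eq_mul, ← Finset.mul_sum, hf i h1 h2 x, mul_zero]

lemma mem_Zmod {f : X → ℂ} : f ∈ Zmod 𝔽 n ↔ ∀ i, 1 ≤ i → i ≤ n - 1 → ∀ x : X,
    ∑ x' ∈ Finset.univ.filter (nbr i x), f x' = 0 := Iff.rfl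

lemma nbr_smul {i : ℕ} (g : GL (Fin n) 𝔽) {x x' : X} (h : nbr i x x') :
    nbr i (g • x) (g • x') := by
  intro k hk hki
  rw [Fl_smul, Fl_smul, h k hk hki]

lemma nbr_smul_iff {i : ℕ} (g : GL (Fin n) 𝔽) {x x' : X} :
    nbr i (g • x) (g • x') ↔ nbr i x x' := by
  constructor
  · intro h
    have := nbr_smul g⁻¹ h
    simpa [inv_smul_smul] using this
  · exact nbr_smul g

lemma Zmod_invariant : RepInvariant (permRep 𝔽 n) (Zmod 𝔽 n) := by
  intro g f hf i h1 h2 x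
  have : ∀ x' : X, (permRep 𝔽 n g f) x' = f (g⁻¹ • x') := fun _ => rfl
  simp only [this]
  rw [show (Finset.univ.filter (nbr i x)) = (Finset.univ.filter (nbr i (g⁻¹ • x))).image
      (fun y => g • y) from ?_]
  · rw [Finset.sum_image (by intro a _ b _ hab; exact smul_left_cancel g hab)]
    simp only [inv_smul_smul]
    exact hf i h1 h2 (g⁻¹ • x)
  · ext y
    simp only [Finset.mem_image, Finset.mem_filter, Finset.mem_univ, true_and]
    constructor
    · intro hy
      exact ⟨g⁻¹ • y, by rwa [← nbr_smul_iff g⁻¹] at hy, smul_inv_smul g y⟩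
    · rintro ⟨z, hz, rfl⟩
      have := nbr_smul g hz
      simpa [smul_inv_smul] using this

/-- straightening: a harmonic function vanishing on the big cell vanishes -/
theorem straighten {f : X → ℂ} (hf : f ∈ Zmod 𝔽 n)
    (h0 : ∀ x : X, OppC x → f x = 0) : ∀ x : X, f x = 0 := by
  suffices H : ∀ N : ℕ, ∀ x : X, Mstat x = N → f x = 0 by
    intro x; exact H (Mstat x) x rfl
  intro N
  induction N using Nat.strong_induction_on with
  | _ N ih =>
    intro x hMx
    by_cases hopp : OppC x
    · exact h0 x hopp
    obtain ⟨i, hi1, hi2, hasc⟩ := not_opp_ascent hopp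
    have hsum := mem_Zmod.1 hf i hi1 hi2 x
    have hxmem : x ∈ Finset.univ.filter (nbr i x) := by
      simp [nbr_refl]
    rw [← Finset.add_sum_erase _ f hxmem] at hsum
    have hrest : ∀ x' ∈ (Finset.univ.filter (nbr i x)).erase x, f x' = 0 := by
      intro x' hx'
      obtain ⟨hne, hmem⟩ := Finset.mem_erase.1 hx'
      have hnb : nbr i x x' := (Finset.mem_filter.1 hmem).2
      have hneF : Fl x' i ≠ Fl x i := by
        intro hFeq
        apply hne
        apply Fl_inj
        intro k hk
        by_cases hki : k = i
        · rw [hki, hFeq]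
        · exact hnb k hk hki
      have hlt : Mstat x' < Mstat x := nbr_M_lt hi1 hi2 hnb hneF hasc
      exact ih (Mstat x') (by omega) x' rfl
    rw [Finset.sum_eq_zero hrest, add_zero] at hsum
    exact hsum
end Zmod
section PermMat
variable {𝔽 : Type*} [Field 𝔽] [Fintype 𝔽] {n : ℕ}

local notation "X" => GL (Fin n) 𝔽 ⧸ BorelGL 𝔽 n

/-- permutation matrix (with convenient action convention) -/
def pmat (𝔽 : Type*) [Field 𝔽] {n : ℕ} (σ : Equiv.Perm (Fin n)) : Matrix (Fin n) (Fin n) 𝔽 :=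
  (σ⁻¹).toPEquiv.toMatrix

lemma pmat_mulVec (σ : Equiv.Perm (Fin n)) (x : Fin n → 𝔽) :
    pmat 𝔽 σ *ᵥ x = fun i => x (σ⁻¹ i) := by
  funext i
  rw [pmat, mulVec, dotProduct]
  rw [Finset.sum_eq_single (σ⁻¹ i)]
  · simp [PEquiv.toMatrix_apply, Equiv.toPEquiv_apply]
  · intro b _ hb
    simp [PEquiv.toMatrix_apply, Equiv.toPEquiv_apply, Ne.symm hb]
    intro hc; exact absurd hc.symm hb
  · simp

lemma pmat_mul (σ τ : Equiv.Perm (Fin n)) :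
    pmat 𝔽 (σ * τ) = pmat 𝔽 σ * pmat 𝔽 τ := by
  rw [pmat, pmat, pmat, _root_.mul_inv_rev]
  have : (τ⁻¹ * σ⁻¹ : Equiv.Perm (Fin n)) = (σ⁻¹).trans τ⁻¹ := rfl
  rw [this, Equiv.toPEquiv_trans, PEquiv.toMatrix_trans]

lemma pmat_one : pmat 𝔽 (1 : Equiv.Perm (Fin n)) = 1 := by
  rw [pmat, inv_one]
  have : (1 : Equiv.Perm (Fin n)) = Equiv.refl (Fin n) := rfl
  rw [this, Equiv.toPEquiv_refl, PEquiv.toMatrix_refl]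

/-- permutation matrices as elements of `GL` -/
def permGL (𝔽 : Type*) [Field 𝔽] [Fintype 𝔽] {n : ℕ} (σ : Equiv.Perm (Fin n)) : GL (Fin n) 𝔽 :=
  ⟨pmat 𝔽 σ, pmat 𝔽 σ⁻¹,
    by rw [← pmat_mul, mul_inv_cancel, pmat_one],
    by rw [← pmat_mul, inv_mul_cancel, pmat_one]⟩

@[simp] lemma permGL_coe (σ : Equiv.Perm (Fin n)) :
    ((permGL 𝔽 σ : GL (Fin n) 𝔽) : Matrix (Fin n) (Fin n) 𝔽) = pmat 𝔽 σ := rfl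

@[simp] lemma permGL_inv_coe (σ : Equiv.Perm (Fin n)) :
    (((permGL 𝔽 σ)⁻¹ : GL (Fin n) 𝔽) : Matrix (Fin n) (Fin n) 𝔽) = pmat 𝔽 σ⁻¹ := rfl

lemma permGL_mul (σ τ : Equiv.Perm (Fin n)) :
    permGL 𝔽 (σ * τ) = permGL 𝔽 σ * permGL 𝔽 τ := by
  apply Units.ext
  rw [Units.val_mul]
  exact pmat_mul σ τ

lemma permGL_map_Dm (σ : Equiv.Perm (Fin n)) (s : Finset (Fin n)) :
    (Dm s : Submodule 𝔽 (Fin n → 𝔽)).map (Lg (permGL 𝔽 σ) : (Fin n → 𝔽) →ₗ[𝔽] (Fin n → 𝔽)) = Dm (s.image σ) := by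
  ext y
  simp only [Submodule.mem_map]
  constructor
  · rintro ⟨x, hx, rfl⟩
    intro m hm
    show (pmat 𝔽 σ *ᵥ x) m = 0
    rw [pmat_mulVec]
    show x (σ⁻¹ m) = 0
    apply hx
    intro hmem
    exact hm (Finset.mem_image.2 ⟨σ⁻¹ m, hmem, by simp⟩)
  · intro hy
    refine ⟨y ∘ σ, ?_, ?_⟩
    · intro k hk
      show y (σ k) = 0
      apply hy
      intro hmem
      obtain ⟨m, hm, hme⟩ := Finset.mem_image.1 hmem
      exact hk (by rwa [← σ.injective hme])
    · show pmat 𝔽 σ *ᵥ (y ∘ σ) = y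
      rw [pmat_mulVec]
      funext m
      show y (σ (σ⁻¹ m)) = y m
      exact congrArg y (σ.apply_symm_apply m)

lemma Fl_permGL_mul (g : GL (Fin n) 𝔽) (σ : Equiv.Perm (Fin n)) (i : ℕ) :
    Fl (QuotientGroup.mk (g * permGL 𝔽 σ) : X) i
      = ((Dm ((Finset.univ.filter (fun k : Fin n => (k : ℕ) < i)).image σ)
          : Submodule 𝔽 (Fin n → 𝔽))).map (Lg g : (Fin n → 𝔽) →ₗ[𝔽] (Fin n → 𝔽)) := by
  rw [Fl_mk, Lg_mul, ← permGL_map_Dm]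
  rfl

lemma map_Lg_eq_bot_iff (g : GL (Fin n) 𝔽) (p : Submodule 𝔽 (Fin n → 𝔽)) :
    p.map (Lg g : (Fin n → 𝔽) →ₗ[𝔽] (Fin n → 𝔽)) = ⊥ ↔ p = ⊥ := by
  constructor
  · intro h
    rw [eq_bot_iff]
    intro v hv
    have : Lg g v ∈ p.map (Lg g : (Fin n → 𝔽) →ₗ[𝔽] (Fin n → 𝔽)) := ⟨v, hv, rfl⟩
    rw [h, Submodule.mem_bot] at this
    have hv0 : v = 0 := (Lg g).injective (by rw [this, map_zero])
    rw [Submodule.mem_bot]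
    exact hv0
  · rintro rfl; exact Submodule.map_bot _

lemma OppC_smulB {b : GL (Fin n) 𝔽} (hb : b ∈ BorelGL 𝔽 n) (g : GL (Fin n) 𝔽) :
    OppC (QuotientGroup.mk (b * g) : X) ↔ OppC (QuotientGroup.mk g : X) := by
  have hFl : ∀ i, Fl (QuotientGroup.mk (b * g) : X) i
      = (Fl (QuotientGroup.mk g : X) i).map (Lg b : (Fin n → 𝔽) →ₗ[𝔽] (Fin n → 𝔽)) := by
    intro i
    rw [Fl_mk, Fl_mk, Lg_mul]
  constructor <;> intro h i h1 h2
  · have := h i h1 h2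
    rw [hFl, ← borel_maps_Cfl hb (n - i),
      ← Submodule.map_inf _ (Lg b).injective, map_Lg_eq_bot_iff] at this
    exact this
  · rw [hFl, ← borel_maps_Cfl hb (n - i), ← Submodule.map_inf _ (Lg b).injective,
      map_Lg_eq_bot_iff]
    exact h i h1 h2

lemma OppC_permGL {σ : Equiv.Perm (Fin n)} :
    OppC (QuotientGroup.mk (permGL 𝔽 σ) : X) ↔ σ = Fin.revPerm := by
  have hFl : ∀ i, Fl (QuotientGroup.mk (permGL 𝔽 σ) : X) i
      = (Dm ((Finset.univ.filter (fun k : Fin n => (k : ℕ) < i)).image σ)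
          : Submodule 𝔽 (Fin n → 𝔽)) := by
    intro i
    have := Fl_permGL_mul (1 : GL (Fin n) 𝔽) σ i
    rw [one_mul] at this
    rw [this]
    ext v
    simp only [Submodule.mem_map]
    constructor
    · rintro ⟨w, hw, rfl⟩
      simpa [Lg_apply, Units.val_one] using hw
    · intro hv
      exact ⟨v, hv, by simp [Lg_apply, Units.val_one]⟩
  constructor
  · intro h
    -- pointwise lower bound σ k ≥ n - 1 - k
    have hlow : ∀ k : Fin n, (n : ℕ) - 1 - (k : ℕ) ≤ (σ k : ℕ) := by
      intro k
      rcases Nat.lt_or_ge ((k : ℕ) + 1) n with hk | hk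
      · -- use i = k+1
        have hcond := h ((k : ℕ)+1) (by omega) (by omega)
        rw [hFl, Cfl, Dm_inf, Dm_eq_bot_iff] at hcond
        by_contra hcon
        push_neg at hcon
        have : σ k ∈ (Finset.univ.filter (fun m : Fin n => (m : ℕ) < (k : ℕ)+1)).image σ
            ∩ Finset.univ.filter (fun m : Fin n => (m : ℕ) < n - ((k : ℕ)+1)) := by
          rw [Finset.mem_inter]
          constructor
          · exact Finset.mem_image.2 ⟨k, by simp, rfl⟩
          · simp only [Finset.mem_filter, Finset.mem_univ, true_and]
            omega
        rw [hcond] at this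
        simpa using this
      · -- k = n-1; trivial
        omega
    -- sums are equal, pointwise bound gives equality
    have hrevval : ∀ k : Fin n, ((Fin.revPerm k : Fin n) : ℕ) = (n : ℕ) - 1 - (k : ℕ) := by
      intro k
      rw [Fin.revPerm_apply, Fin.val_rev]
      omega
    have hsum : ∑ k : Fin n, ((σ k : ℕ)) = ∑ k : Fin n, ((n : ℕ) - 1 - (k : ℕ)) := by
      rw [Equiv.sum_comp σ (fun m : Fin n => (m : ℕ))]
      rw [← Equiv.sum_comp Fin.revPerm (fun m : Fin n => (m : ℕ))]
      apply Finset.sum_congr rfl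
      intro k _
      rw [hrevval]
    have hpt : ∀ k : Fin n, ((σ k : ℕ)) = (n : ℕ) - 1 - (k : ℕ) := by
      have := (Finset.sum_eq_sum_iff_of_le (fun k _ => hlow k)).1 hsum.symm
      intro k
      exact ((this k (Finset.mem_univ k))).symm
    apply Equiv.ext
    intro k
    apply Fin.ext
    rw [hpt k, hrevval k]
  · rintro rfl
    intro i h1 h2
    rw [hFl, Cfl, Dm_inf, Dm_eq_bot_iff]
    rw [Finset.eq_empty_iff_forall_notMem]
    intro m hm
    rw [Finset.mem_inter, Finset.mem_image] at hm
    obtain ⟨⟨k, hk, hkm⟩, hm2⟩ := hm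
    simp only [Finset.mem_filter, Finset.mem_univ, true_and] at hk hm2
    subst hkm
    rw [Fin.revPerm_apply, Fin.val_rev] at hm2
    have := k.2
    omega
end PermMat
section NormalForm
variable {𝔽 : Type*} [Field 𝔽] [Fintype 𝔽] {n : ℕ}

local notation "X" => GL (Fin n) 𝔽 ⧸ BorelGL 𝔽 n

def isUT (A : Matrix (Fin n) (Fin n) 𝔽) : Prop :=
  A.BlockTriangular id ∧ ∀ i, A i i = 1

lemma isUT_det {A : Matrix (Fin n) (Fin n) 𝔽} (h : isUT A) : A.det = 1 := by
  rw [Matrix.det_of_upperTriangular h.1]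
  simp [h.2]

noncomputable def utGL (A : Matrix (Fin n) (Fin n) 𝔽) (h : isUT A) : GL (Fin n) 𝔽 :=
  ⟨A, A⁻¹, Matrix.mul_nonsing_inv A (by rw [isUT_det h]; exact isUnit_one),
    Matrix.nonsing_inv_mul A (by rw [isUT_det h]; exact isUnit_one)⟩

@[simp] lemma utGL_coe (A : Matrix (Fin n) (Fin n) 𝔽) (h : isUT A) :
    ((utGL A h : GL (Fin n) 𝔽) : Matrix (Fin n) (Fin n) 𝔽) = A := rfl

lemma utGL_mem_borel (A : Matrix (Fin n) (Fin n) 𝔽) (h : isUT A) :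
    utGL A h ∈ BorelGL 𝔽 n := h.1

lemma revPerm_inv : (Fin.revPerm : Equiv.Perm (Fin n))⁻¹ = Fin.revPerm := by
  apply Equiv.ext
  intro k
  simp [Equiv.Perm.inv_def]

/-- existence of the unitriangular normal form for cosets in the big cell -/
lemma exists_normal_form (x : X) (hx : OppC x) :
    ∃ (A : Matrix (Fin n) (Fin n) 𝔽) (h : isUT A),
      (QuotientGroup.mk (utGL A h * permGL 𝔽 Fin.revPerm) : X) = x := by
  have hrank_top : Module.finrank 𝔽 (Fin n → 𝔽) = n := by
    rw [Module.finrank_pi, Fintype.card_fin]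
  have hsup : ∀ k : Fin n, Fl x (n - (k:ℕ)) ⊔ Cfl 𝔽 n (k:ℕ) = ⊤ := by
    intro k
    rcases Nat.eq_zero_or_pos (k : ℕ) with hk0 | hkpos
    · rw [hk0, Cfl_zero, sup_bot_eq, Nat.sub_zero, Fl_top x le_rfl]
    · have hk2 := k.2
      have hinf : Fl x (n - (k:ℕ)) ⊓ Cfl 𝔽 n (k:ℕ) = ⊥ := by
        have := hx (n - (k:ℕ)) (by omega) (by omega)
        rwa [show n - (n - (k:ℕ)) = (k:ℕ) by omega] at this
      have hfr := Submodule.finrank_sup_add_finrank_inf_eq (Fl x (n - (k:ℕ))) (Cfl 𝔽 n (k:ℕ))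
      rw [hinf, finrank_bot, finrank_Fl x (by omega), finrank_Cfl (by omega)] at hfr
      apply Submodule.eq_top_of_finrank_eq
      rw [hrank_top]
      omega
  have H : ∀ k : Fin n, ∃ f c, f ∈ Fl x (n - (k:ℕ)) ∧ c ∈ Cfl 𝔽 n (k:ℕ)
      ∧ f + c = Pi.single k 1 := by
    intro k
    have : (Pi.single k 1 : Fin n → 𝔽) ∈ Fl x (n - (k:ℕ)) ⊔ Cfl 𝔽 n (k:ℕ) := by
      rw [hsup k]; trivial
    obtain ⟨f, hf, c, hc, hfc⟩ := Submodule.mem_sup.1 this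
    exact ⟨f, c, hf, hc, hfc⟩
  choose fv cv hfmem hcmem hsumv using H
  set A : Matrix (Fin n) (Fin n) 𝔽 := Matrix.of (fun r k => fv k r) with hA
  have hcol : ∀ k r : Fin n, fv k r + cv k r = (Pi.single k 1 : Fin n → 𝔽) r := by
    intro k r
    exact congrFun (hsumv k) r
  have hUT : isUT A := by
    constructor
    · intro a b hab
      simp only [id] at hab
      show fv b a = 0
      have h1 := hcol b a
      have h2 : cv b a = 0 := mem_Cfl.1 (hcmem b) a (le_of_lt hab)
      have h3 : (Pi.single b 1 : Fin n → 𝔽) a = 0 := by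
        have : b ≠ a := ne_of_lt hab
        simp [Pi.single_apply, Ne.symm this]
      rw [h2, h3, add_zero] at h1
      exact h1
    · intro k
      show fv k k = 1
      have h1 := hcol k k
      have h2 : cv k k = 0 := mem_Cfl.1 (hcmem k) k le_rfl
      have h3 : (Pi.single k 1 : Fin n → 𝔽) k = 1 := by simp
      rw [h2, add_zero, h3] at h1
      exact h1
  refine ⟨A, hUT, ?_⟩
  apply Fl_inj
  intro i hi
  rw [Fl_permGL_mul (utGL A hUT) Fin.revPerm i]
  set S : Finset (Fin n) :=
    (Finset.univ.filter (fun k : Fin n => (k : ℕ) < i)).image Fin.revPerm with hSdef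
  have hS : S = Finset.univ.filter (fun m : Fin n => n - i ≤ (m:ℕ)) := by
    ext m
    rw [hSdef]
    simp only [Finset.mem_image, Finset.mem_filter, Finset.mem_univ, true_and]
    constructor
    · rintro ⟨k, hk, rfl⟩
      rw [Fin.revPerm_apply, Fin.val_rev]
      have := k.2
      omega
    · intro hm
      refine ⟨Fin.revPerm m, ?_, by simp [Fin.revPerm_apply, Fin.rev_rev]⟩
      rw [Fin.revPerm_apply, Fin.val_rev]
      have := m.2
      omega
  have hmapval : ∀ m : Fin n, Lg (utGL A hUT) (Pi.single m 1) = fv m := by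
    intro m
    funext r
    show ((A : Matrix (Fin n) (Fin n) 𝔽) *ᵥ Pi.single m 1) r = fv m r
    rw [mulVec_single]
    show A r m * 1 = fv m r
    rw [mul_one]
    rfl
  have hle : (Dm S : Submodule 𝔽 (Fin n → 𝔽)).map (Lg (utGL A hUT) : (Fin n → 𝔽) →ₗ[𝔽] (Fin n → 𝔽)) ≤ Fl x i := by
    rw [Dm_eq_span, Submodule.map_span, Submodule.span_le]
    rintro - ⟨-, ⟨m, hm, rfl⟩, rfl⟩
    simp only [LinearEquiv.coe_coe]
    rw [hmapval m]
    have hmS : n - i ≤ (m : ℕ) := by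
      have : m ∈ S := hm
      rw [hS] at this
      exact (Finset.mem_filter.1 this).2
    exact Fl_mono x (by have := m.2; omega) (hfmem m)
  have hcard : S.card = i := by
    rw [hS]
    have h1 := card_filter_lt n (n - i)
    have h2 := Finset.card_filter_add_card_filter_not
      (s := (Finset.univ : Finset (Fin n))) (p := fun m : Fin n => (m:ℕ) < n - i)
    have h3 : Finset.univ.filter (fun m : Fin n => ¬ ((m:ℕ) < n - i))
        = Finset.univ.filter (fun m : Fin n => n - i ≤ (m:ℕ)) := by
      ext m
      simp [not_lt]
    rw [h3, Finset.card_univ, Fintype.card_fin] at h2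
    omega
  apply Submodule.eq_of_le_of_finrank_le hle
  rw [finrank_Fl x hi, finrank_map_Lg, finrank_Dm, hcard]

/-- uniqueness of the normal form -/
lemma normal_form_inj {A A' : Matrix (Fin n) (Fin n) 𝔽} (h : isUT A) (h' : isUT A')
    (heq : (QuotientGroup.mk (utGL A h * permGL 𝔽 Fin.revPerm) : X)
      = QuotientGroup.mk (utGL A' h' * permGL 𝔽 Fin.revPerm)) : A = A' := by
  set R := permGL 𝔽 (Fin.revPerm (n := n))
  set u := utGL A h
  set u' := utGL A' h'
  have hmem : (u * R)⁻¹ * (u' * R) ∈ BorelGL 𝔽 n := QuotientGroup.eq.1 heq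
  set V : GL (Fin n) 𝔽 := u⁻¹ * u' with hV
  have hgrp : (u * R)⁻¹ * (u' * R) = R⁻¹ * V * R := by rw [hV]; group
  rw [hgrp] at hmem
  have hVB : V ∈ BorelGL 𝔽 n :=
    Subgroup.mul_mem _ (Subgroup.inv_mem _ (utGL_mem_borel A h)) (utGL_mem_borel A' h')
  -- entries of R⁻¹ V R
  have hconj : ((R⁻¹ * V * R : GL (Fin n) 𝔽) : Matrix (Fin n) (Fin n) 𝔽)
      = ((V : Matrix (Fin n) (Fin n) 𝔽)).submatrix Fin.revPerm Fin.revPerm := by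
    rw [Units.val_mul, Units.val_mul]
    have h1 : ((R⁻¹ : GL (Fin n) 𝔽) : Matrix (Fin n) (Fin n) 𝔽)
        = (Fin.revPerm (n := n)).toPEquiv.toMatrix := by
      show pmat 𝔽 (Fin.revPerm (n := n))⁻¹ = _
      rw [pmat, revPerm_inv, revPerm_inv]
    have h2 : ((R : GL (Fin n) 𝔽) : Matrix (Fin n) (Fin n) 𝔽)
        = (Fin.revPerm (n := n)).toPEquiv.toMatrix := by
      show pmat 𝔽 (Fin.revPerm (n := n)) = _
      rw [pmat, revPerm_inv]
    rw [h1, h2, PEquiv.toMatrix_toPEquiv_mul]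
    rw [PEquiv.mul_toMatrix_toPEquiv]
    have : (Fin.revPerm (n := n)).symm = Fin.revPerm := rfl
    rw [this]
    rfl
  have hlow : ∀ a b : Fin n, a < b → (V : Matrix (Fin n) (Fin n) 𝔽) a b = 0 := by
    intro a b hab
    have := hmem (i := Fin.revPerm a) (j := Fin.revPerm b) (by
      simp only [id, Fin.revPerm_apply]
      exact Fin.rev_lt_rev.2 hab)
    rw [hconj] at this
    simpa [Fin.rev_rev] using this
  have hdiag : ∀ k : Fin n, (V : Matrix (Fin n) (Fin n) 𝔽) k k = 1 := by
    intro k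
    have hAA : (A : Matrix (Fin n) (Fin n) 𝔽) * (V : Matrix (Fin n) (Fin n) 𝔽) = A' := by
      have : u * V = u' := by rw [hV]; group
      have hval := congrArg (Units.val) this
      rw [Units.val_mul] at hval
      exact hval
    have := congrFun (congrFun (congrArg (fun M => M) hAA) k) k
    have hentry : ((A : Matrix (Fin n) (Fin n) 𝔽) * (V : Matrix (Fin n) (Fin n) 𝔽)) k k
        = (V : Matrix (Fin n) (Fin n) 𝔽) k k := by
      rw [Matrix.mul_apply]
      rw [Finset.sum_eq_single k]
      · rw [h.2, one_mul]
      · intro b _ hbk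
        rcases lt_or_gt_of_ne hbk with hlt | hgt
        · rw [h.1 (show id b < id k from hlt), zero_mul]
        · rw [hVB (show id k < id b from hgt), mul_zero]
      · intro hk; exact absurd (Finset.mem_univ k) hk
    have hA'kk : ((A : Matrix (Fin n) (Fin n) 𝔽) * (V : Matrix (Fin n) (Fin n) 𝔽)) k k
        = (1 : 𝔽) := by rw [hAA, h'.2]
    rw [hentry] at hA'kk
    exact hA'kk
  have hVone : (V : Matrix (Fin n) (Fin n) 𝔽) = 1 := by
    ext a b
    rcases eq_or_ne a b with rfl | hab
    · rw [hdiag, Matrix.one_apply_eq]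
    · rcases lt_or_gt_of_ne hab with hlt | hgt
      · rw [hlow a b hlt, Matrix.one_apply_ne hab]
      · rw [hVB (show id b < id a from hgt), Matrix.one_apply_ne hab]
  have : u * V = u' := by rw [hV]; group
  have hval := congrArg (Units.val) this
  rw [Units.val_mul, hVone, mul_one] at hval
  exact hval

end NormalForm
section Apartment
variable {𝔽 : Type*} [Field 𝔽] [Fintype 𝔽] {n : ℕ}

local notation "X" => GL (Fin n) 𝔽 ⧸ BorelGL 𝔽 n

lemma permGL_one : permGL 𝔽 (1 : Equiv.Perm (Fin n)) = 1 := by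
  apply Units.ext
  show pmat 𝔽 (1 : Equiv.Perm (Fin n)) = 1
  exact pmat_one

/-- apartment class attached to `g` -/
noncomputable def ya (g : GL (Fin n) 𝔽) : (GL (Fin n) 𝔽 ⧸ BorelGL 𝔽 n) → ℂ :=
  fun x => ∑ w : Equiv.Perm (Fin n), ((Equiv.Perm.sign w : ℤ) : ℂ)
    * (if (QuotientGroup.mk (g * permGL 𝔽 w) : X) = x then 1 else 0)

lemma image_filter_swap {i : ℕ} (h1 : 1 ≤ i) (h2 : i ≤ n - 1) {k : ℕ} (hk : k ≤ n)
    (hki : k ≠ i) :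
    (Finset.univ.filter (fun m : Fin n => (m : ℕ) < k)).image
        (Equiv.swap (⟨i-1, by omega⟩ : Fin n) (⟨i, by omega⟩ : Fin n))
      = Finset.univ.filter (fun m : Fin n => (m : ℕ) < k) := by
  set a : Fin n := ⟨i-1, by omega⟩
  set b : Fin n := ⟨i, by omega⟩
  set T := Finset.univ.filter (fun m : Fin n => (m : ℕ) < k) with hT
  rcases Nat.lt_or_ge (k) i with hcase | hcase
  · -- a, b ∉ T : swap fixes T pointwise
    have himg : T.image (⇑(Equiv.swap a b)) = T.image id := by
      apply Finset.image_congr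
      intro m hm
      rw [hT] at hm
      simp only [Finset.coe_filter, Set.mem_setOf_eq] at hm
      have hma : m ≠ a := by
        intro hcon
        rw [hcon] at hm
        have : (a : ℕ) = i - 1 := rfl
        omega
      have hmb : m ≠ b := by
        intro hcon
        rw [hcon] at hm
        have : (b : ℕ) = i := rfl
        omega
      show Equiv.swap a b m = m
      exact Equiv.swap_apply_of_ne_of_ne hma hmb
    rw [himg, Finset.image_id]
  · -- k > i : a, b ∈ T, swap maps T into T
    have hik : i < k := by omega
    apply Finset.eq_of_subset_of_card_le
    · intro m hm
      obtain ⟨m', hm', rfl⟩ := Finset.mem_image.1 hm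
      rw [hT, Finset.mem_filter] at hm' ⊢
      refine ⟨Finset.mem_univ _, ?_⟩
      rcases eq_or_ne m' a with rfl | hna
      · rw [Equiv.swap_apply_left]
        show (i : ℕ) < k
        omega
      rcases eq_or_ne m' b with rfl | hnb
      · rw [Equiv.swap_apply_right]
        show (i - 1 : ℕ) < k
        omega
      · rw [Equiv.swap_apply_of_ne_of_ne hna hnb]
        exact hm'.2
    · rw [Finset.card_image_of_injective _ (Equiv.injective _)]

lemma nbr_apartment {i : ℕ} (h1 : 1 ≤ i) (h2 : i ≤ n - 1) (g : GL (Fin n) 𝔽)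
    (w : Equiv.Perm (Fin n)) :
    nbr i (QuotientGroup.mk (g * permGL 𝔽 w) : X)
      (QuotientGroup.mk (g * permGL 𝔽
        (w * Equiv.swap (⟨i-1, by omega⟩ : Fin n) (⟨i, by omega⟩ : Fin n))) : X) := by
  intro k hk hki
  rw [Fl_permGL_mul, Fl_permGL_mul]
  congr 1
  have : ⇑(w * Equiv.swap (⟨i-1, by omega⟩ : Fin n) (⟨i, by omega⟩ : Fin n)) =
      ⇑w ∘ ⇑(Equiv.swap (⟨i-1, by omega⟩ : Fin n) (⟨i, by omega⟩ : Fin n)) := rfl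
  rw [this, ← Finset.image_image, image_filter_swap h1 h2 hk hki]

lemma ya_mem_Zmod (g : GL (Fin n) 𝔽) : ya g ∈ Zmod 𝔽 n := by
  rw [mem_Zmod]
  intro i h1 h2 x
  have hswap : ∀ w : Equiv.Perm (Fin n),
      ∑ x' ∈ Finset.univ.filter (nbr i x),
        (if (QuotientGroup.mk (g * permGL 𝔽 w) : X) = x' then (1:ℂ) else 0)
      = (if (QuotientGroup.mk (g * permGL 𝔽 w) : X) ∈ Finset.univ.filter (nbr i x)
          then (1:ℂ) else 0) := by
    intro w
    rw [Finset.sum_ite_eq]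
  rw [show (∑ x' ∈ Finset.univ.filter (nbr i x), ya g x')
      = ∑ w : Equiv.Perm (Fin n), ((Equiv.Perm.sign w : ℤ) : ℂ)
          * (if (QuotientGroup.mk (g * permGL 𝔽 w) : X) ∈ Finset.univ.filter (nbr i x)
              then (1:ℂ) else 0) from ?_]
  · -- involution pairing
    set s : Equiv.Perm (Fin n) :=
      Equiv.swap (⟨i-1, by omega⟩ : Fin n) (⟨i, by omega⟩ : Fin n) with hs
    have hab : (⟨i-1, by omega⟩ : Fin n) ≠ (⟨i, by omega⟩ : Fin n) := by
      intro hcon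
      have := congrArg (fun z : Fin n => (z : ℕ)) hcon
      simp only [Fin.val_mk] at this
      omega
    apply Finset.sum_involution (fun w _ => w * s)
    · intro w _
      have hsign : ((Equiv.Perm.sign (w * s) : ℤ) : ℂ) = -((Equiv.Perm.sign w : ℤ) : ℂ) := by
        rw [Equiv.Perm.sign_mul, hs, Equiv.Perm.sign_swap hab]
        push_cast
        ring
      have hind : (if (QuotientGroup.mk (g * permGL 𝔽 (w * s)) : X)
            ∈ Finset.univ.filter (nbr i x) then (1:ℂ) else 0)
          = (if (QuotientGroup.mk (g * permGL 𝔽 w) : X)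
            ∈ Finset.univ.filter (nbr i x) then (1:ℂ) else 0) := by
        have hnb := nbr_apartment h1 h2 g w
        rw [← hs] at hnb
        simp only [Finset.mem_filter, Finset.mem_univ, true_and]
        by_cases hmem : nbr i x (QuotientGroup.mk (g * permGL 𝔽 w) : X)
        · rw [if_pos hmem, if_pos (nbr_trans hmem hnb)]
        · rw [if_neg hmem, if_neg ?_]
          intro hcon
          exact hmem (nbr_trans hcon (nbr_symm hnb))
      rw [hsign, hind]
      ring
    · intro w _ hne
      intro hcon
      have : s = 1 := by
        have := congrArg (fun z => w⁻¹ * z) hcon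
        simpa [mul_assoc] using this
      rw [hs] at this
      have := congrArg (fun e : Equiv.Perm (Fin n) => e (⟨i-1, by omega⟩ : Fin n)) this
      simp only [Equiv.swap_apply_left, Equiv.Perm.one_apply] at this
      exact hab.symm this
    · intro w _; exact Finset.mem_univ _
    · intro w _
      rw [mul_assoc, hs, Equiv.swap_mul_self, mul_one]
  · simp only [ya]
    rw [Finset.sum_comm]
    apply Finset.sum_congr rfl
    intro w _
    rw [← Finset.mul_sum, hswap w]
end Apartment
section Dimension
variable {𝔽 : Type*} [Field 𝔽] [Fintype 𝔽] {n : ℕ}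

local notation "X" => GL (Fin n) 𝔽 ⧸ BorelGL 𝔽 n

lemma OppC_nf (A : Matrix (Fin n) (Fin n) 𝔽) (h : isUT A) :
    OppC (QuotientGroup.mk (utGL A h * permGL 𝔽 Fin.revPerm) : X) := by
  rw [OppC_smulB (utGL_mem_borel A h), OppC_permGL]

lemma ya_delta (A : Matrix (Fin n) (Fin n) 𝔽) (h : isUT A) {s : X} (hs : OppC s) :
    ya (utGL A h * permGL 𝔽 Fin.revPerm) s
      = (if (QuotientGroup.mk (utGL A h * permGL 𝔽 Fin.revPerm) : X) = s then (1:ℂ) else 0) := by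
  simp only [ya]
  rw [Finset.sum_eq_single (1 : Equiv.Perm (Fin n))]
  · rw [permGL_one, mul_one]
    simp
  · intro w _ hw
    rw [mul_assoc, ← permGL_mul]
    have : ¬ (QuotientGroup.mk (utGL A h * permGL 𝔽 (Fin.revPerm * w)) : X) = s := by
      intro hcon
      have hOpp : OppC (QuotientGroup.mk (utGL A h * permGL 𝔽 (Fin.revPerm * w)) : X) := by
        rw [hcon]; exact hs
      rw [OppC_smulB (utGL_mem_borel A h), OppC_permGL] at hOpp
      apply hw
      have := congrArg (fun z => (Fin.revPerm : Equiv.Perm (Fin n))⁻¹ * z) hOpp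
      simpa [← mul_assoc, inv_mul_cancel] using this
    rw [if_neg this, mul_zero]
  · intro hcon
    exact absurd (Finset.mem_univ _) hcon

/-- restriction to the big cell -/
noncomputable def resMap (𝔽 : Type*) [Field 𝔽] [Fintype 𝔽] (n : ℕ) :
    (Zmod 𝔽 n) →ₗ[ℂ] ({x : GL (Fin n) 𝔽 ⧸ BorelGL 𝔽 n // OppC x} → ℂ) where
  toFun f := fun t => f.1 t.1
  map_add' := by intros; rfl
  map_smul' := by intros; rfl

lemma resMap_injective : Function.Injective (resMap 𝔽 n) := by
  intro f g hfg
  have hdiff : ∀ x : X, OppC x → (f.1 - g.1) x = 0 := by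
    intro x hx
    have h2 : f.1 x = g.1 x := congrFun hfg ⟨x, hx⟩
    rw [Pi.sub_apply, h2, sub_self]
  have hz : (f.1 - g.1) ∈ Zmod 𝔽 n := Submodule.sub_mem _ f.2 g.2
  have hall := straighten hz hdiff
  apply Subtype.ext
  funext x
  have hx := hall x
  rwa [Pi.sub_apply, sub_eq_zero] at hx

lemma resMap_surjective : Function.Surjective (resMap 𝔽 n) := by
  intro φ
  have H : ∀ t : {x : X // OppC x}, ∃ (A : Matrix (Fin n) (Fin n) 𝔽) (h : isUT A),
      (QuotientGroup.mk (utGL A h * permGL 𝔽 Fin.revPerm) : X) = t.1 :=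
    fun t => exists_normal_form t.1 t.2
  choose Am hAm hAmt using H
  refine ⟨⟨∑ t : {x : X // OppC x}, φ t • ya (utGL (Am t) (hAm t) * permGL 𝔽 Fin.revPerm), ?_⟩, ?_⟩
  · apply Submodule.sum_mem
    intro t _
    exact Submodule.smul_mem _ _ (ya_mem_Zmod _)
  · funext t₀
    show (∑ t : {x : X // OppC x}, φ t • ya (utGL (Am t) (hAm t) * permGL 𝔽 Fin.revPerm)) t₀.1 = φ t₀
    rw [Finset.sum_apply]
    rw [Finset.sum_eq_single t₀]
    · simp only [Pi.smul_apply, smul_eq_mul]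
      rw [ya_delta _ _ t₀.2, hAmt t₀, if_pos rfl, mul_one]
    · intro t _ ht
      simp only [Pi.smul_apply, smul_eq_mul]
      rw [ya_delta _ _ t₀.2, hAmt t]
      rw [if_neg (fun hcon => ht (Subtype.ext hcon)), mul_zero]
    · intro hcon
      exact absurd (Finset.mem_univ _) hcon

noncomputable def resEquiv : (Zmod 𝔽 n) ≃ₗ[ℂ] ({x : X // OppC x} → ℂ) :=
  LinearEquiv.ofBijective (resMap 𝔽 n) ⟨resMap_injective, resMap_surjective⟩

/-- the unitriangular parametrization of the big cell -/
noncomputable def bigCellEquiv : {A : Matrix (Fin n) (Fin n) 𝔽 // isUT A} ≃ {x : X // OppC x} :=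
  Equiv.ofBijective (fun A => ⟨QuotientGroup.mk (utGL A.1 A.2 * permGL 𝔽 Fin.revPerm),
    OppC_nf A.1 A.2⟩) (by
    constructor
    · intro A A' hAA
      exact Subtype.ext (normal_form_inj A.2 A'.2 (congrArg Subtype.val hAA))
    · intro t
      obtain ⟨A, h, ht⟩ := exists_normal_form t.1 t.2
      exact ⟨⟨A, h⟩, Subtype.ext ht⟩)

noncomputable def utParamEquiv :
    {A : Matrix (Fin n) (Fin n) 𝔽 // isUT A} ≃ ({p : Fin n × Fin n // p.1 < p.2} → 𝔽) where
  toFun A := fun p => A.1 p.1.1 p.1.2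
  invFun f := ⟨Matrix.of (fun i j =>
      if h : i < j then f ⟨(i, j), h⟩ else if i = j then 1 else 0), by
    constructor
    · intro a b hab
      have h1 : ¬ (a < b) := by
        simp only [id] at hab
        exact fun hcon => absurd (lt_trans hab hcon) (lt_irrefl _)
      have h2 : ¬ (a = b) := by
        intro hcon
        rw [hcon] at hab
        exact absurd hab (lt_irrefl _)
      show (if h : a < b then _ else if a = b then (1:𝔽) else 0) = 0
      rw [dif_neg h1, if_neg h2]
    · intro k
      show (if h : k < k then _ else if k = k then (1:𝔽) else 0) = 1
      rw [dif_neg (lt_irrefl k), if_pos rfl]⟩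
  left_inv := by
    rintro ⟨A, hA⟩
    apply Subtype.ext
    ext a b
    show (if h : a < b then A a b else if a = b then (1:𝔽) else 0) = A a b
    rcases lt_trichotomy a b with h | h | h
    · rw [dif_pos h]
    · rw [dif_neg (by rw [h]; exact lt_irrefl b), if_pos h, h, hA.2 b]
    · rw [dif_neg (by exact fun hcon => absurd (lt_trans h hcon) (lt_irrefl _)),
        if_neg (by intro hcon; rw [hcon] at h; exact absurd h (lt_irrefl _)),
        hA.1 (show id b < id a from h)]
  right_inv := by
    intro f
    funext p
    show (if h : p.1.1 < p.1.2 then f ⟨(p.1.1, p.1.2), h⟩ else _) = f p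
    rw [dif_pos p.2]

noncomputable def pairsEquiv : {p : Fin n × Fin n // p.1 < p.2} ≃ (Σ j : Fin n, Fin (j : ℕ)) where
  toFun p := ⟨p.1.2, ⟨(p.1.1 : ℕ), p.2⟩⟩
  invFun s := ⟨(⟨(s.2 : ℕ), lt_trans s.2.2 s.1.2⟩, s.1), s.2.2⟩
  left_inv := by
    rintro ⟨⟨a, b⟩, h⟩
    apply Subtype.ext
    simp
  right_inv := by
    rintro ⟨j, m⟩
    rfl

lemma card_pairs : Fintype.card {p : Fin n × Fin n // p.1 < p.2} = n * (n - 1) / 2 := by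
  rw [Fintype.card_congr pairsEquiv, Fintype.card_sigma]
  simp only [Fintype.card_fin]
  rw [Fin.sum_univ_eq_sum_range (fun i => i) n]
  have h2 := Finset.sum_range_id_mul_two n
  omega

lemma card_bigcell (q : ℕ) (hq : Fintype.card 𝔽 = q) :
    Fintype.card {x : X // OppC x} = q ^ (n * (n - 1) / 2) := by
  rw [← Fintype.card_congr (bigCellEquiv (𝔽 := 𝔽) (n := n))]
  rw [Fintype.card_congr (utParamEquiv (𝔽 := 𝔽) (n := n))]
  rw [Fintype.card_fun, hq, card_pairs]

lemma finrank_Zmod (q : ℕ) (hq : Fintype.card 𝔽 = q) :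
    Module.finrank ℂ (Zmod 𝔽 n) = q ^ (n * (n - 1) / 2) := by
  rw [LinearEquiv.finrank_eq (resEquiv (𝔽 := 𝔽) (n := n))]
  rw [Module.finrank_pi, card_bigcell q hq]
end Dimension
section Endgame
variable {𝔽 : Type*} [Field 𝔽] [Fintype 𝔽] {n : ℕ}

local notation "X" => GL (Fin n) 𝔽 ⧸ BorelGL 𝔽 n

lemma permRep_apply (g : GL (Fin n) 𝔽) (f : X → ℂ) (x : X) :
    permRep 𝔽 n g f x = f (g⁻¹ • x) := rfl

/-- B-invariant functions are constant on the big cell -/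
lemma oppc_const {f : X → ℂ} (hB : ∀ b ∈ BorelGL 𝔽 n, ∀ x : X, f (b • x) = f x)
    {s t : X} (hs : OppC s) (ht : OppC t) : f s = f t := by
  obtain ⟨A, h, hA⟩ := exists_normal_form s hs
  obtain ⟨A', h', hA'⟩ := exists_normal_form t ht
  set b : GL (Fin n) 𝔽 := utGL A h * (utGL A' h')⁻¹ with hb
  have hbB : b ∈ BorelGL 𝔽 n :=
    Subgroup.mul_mem _ (utGL_mem_borel A h) (Subgroup.inv_mem _ (utGL_mem_borel A' h'))
  have hbt : b • t = s := by
    rw [← hA, ← hA']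
    rw [MulAction.Quotient.smul_mk]
    congr 1
    rw [smul_eq_mul, hb]
    group
  rw [← hbt, hB b hbB t]

lemma exists_B_fixed {W : Submodule ℂ ((GL (Fin n) 𝔽 ⧸ BorelGL 𝔽 n) → ℂ)}
    (hW : RepInvariant (permRep 𝔽 n) W) (hne : W ≠ ⊥) :
    ∃ f, f ∈ W ∧ f ≠ 0 ∧ ∀ b ∈ BorelGL 𝔽 n, permRep 𝔽 n b f = f := by
  obtain ⟨f₀, hf₀W, hf₀ne⟩ := Submodule.exists_mem_ne_zero_of_ne_bot hne
  have : ∃ x₁ : X, f₀ x₁ ≠ 0 := by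
    by_contra hc
    push_neg at hc
    exact hf₀ne (funext hc)
  obtain ⟨x₁, hx₁⟩ := this
  obtain ⟨k, hk⟩ := QuotientGroup.mk_surjective x₁
  set F : X → ℂ := ∑ b : (BorelGL 𝔽 n), permRep 𝔽 n ((b : GL (Fin n) 𝔽) * k⁻¹) f₀ with hF
  refine ⟨F, ?_, ?_, ?_⟩
  · rw [hF]
    apply Submodule.sum_mem
    intro b _
    exact hW _ _ hf₀W
  · -- F (mk 1) = |B| * f₀ x₁ ≠ 0
    intro hFzero
    have hval : F (QuotientGroup.mk 1) = (Fintype.card (BorelGL 𝔽 n) : ℂ) * f₀ x₁ := by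
      rw [hF, Finset.sum_apply]
      rw [Finset.sum_congr rfl (fun b _ => ?_), Finset.sum_const, Finset.card_univ]
      · rw [nsmul_eq_mul]
      · rw [permRep_apply]
        congr 1
        rw [← hk]
        rw [_root_.mul_inv_rev, inv_inv]
        rw [MulAction.Quotient.smul_mk]
        rw [smul_eq_mul, mul_one, QuotientGroup.eq]
        rw [_root_.mul_inv_rev, inv_inv]
        rw [mul_assoc, inv_mul_cancel, mul_one]
        exact b.2
    rw [hFzero] at hval
    have hcard : (Fintype.card (BorelGL 𝔽 n) : ℂ) ≠ 0 := by
      simp [Fintype.card_ne_zero]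
    rcases mul_eq_zero.1 hval.symm with hc | hc
    · exact hcard hc
    · exact hx₁ hc
  · intro b₀ hb₀
    rw [hF, map_sum]
    refine Fintype.sum_equiv (Equiv.mulLeft (⟨b₀, hb₀⟩ : (BorelGL 𝔽 n)))
      (fun b => permRep 𝔽 n b₀ (permRep 𝔽 n ((b : GL (Fin n) 𝔽) * k⁻¹) f₀))
      (fun b => permRep 𝔽 n ((b : GL (Fin n) 𝔽) * k⁻¹) f₀) ?_
    intro b
    simp only [Equiv.coe_mulLeft]
    conv_rhs => rw [Subgroup.coe_mul, mul_assoc, _root_.map_mul]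
    rfl
end Endgame
section Maschke
variable {𝔽 : Type*} [Field 𝔽] [Fintype 𝔽] {n : ℕ}

local notation "X" => GL (Fin n) 𝔽 ⧸ BorelGL 𝔽 n

lemma permRep_mul_apply (a b : GL (Fin n) 𝔽) (f : (GL (Fin n) 𝔽 ⧸ BorelGL 𝔽 n) → ℂ) :
    permRep 𝔽 n (a * b) f = permRep 𝔽 n a (permRep 𝔽 n b f) := by
  rw [_root_.map_mul]; rfl

lemma invariant_complement {P : Submodule ℂ ((GL (Fin n) 𝔽 ⧸ BorelGL 𝔽 n) → ℂ)}
    (hP : RepInvariant (permRep 𝔽 n) P) (hPZ : P ≤ Zmod 𝔽 n) :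
    ∃ Q : Submodule ℂ ((GL (Fin n) 𝔽 ⧸ BorelGL 𝔽 n) → ℂ),
      RepInvariant (permRep 𝔽 n) Q ∧ Q ≤ Zmod 𝔽 n ∧ P ⊓ Q = ⊥ ∧
      ∀ z ∈ Zmod 𝔽 n, ∃ p ∈ P, ∃ qv ∈ Q, p + qv = z := by
  obtain ⟨Q₀, hQ₀⟩ := Submodule.exists_isCompl P
  set π₀ : ((GL (Fin n) 𝔽 ⧸ BorelGL 𝔽 n) → ℂ) →ₗ[ℂ] ((GL (Fin n) 𝔽 ⧸ BorelGL 𝔽 n) → ℂ) :=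
    P.subtype ∘ₗ (P.linearProjOfIsCompl Q₀ hQ₀) with hπ₀
  have hπ₀P : ∀ v, π₀ v ∈ P := fun v => (P.linearProjOfIsCompl Q₀ hQ₀ v).2
  have hπ₀id : ∀ p ∈ P, π₀ p = p := by
    intro p hp
    show P.subtype (P.linearProjOfIsCompl Q₀ hQ₀ p) = p
    have : p = ((⟨p, hp⟩ : P) : (GL (Fin n) 𝔽 ⧸ BorelGL 𝔽 n) → ℂ) := rfl
    rw [this]
    exact congrArg P.subtype (Submodule.linearProjOfIsCompl_apply_left hQ₀ ⟨p, hp⟩)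
  set N : ℂ := (Fintype.card (GL (Fin n) 𝔽) : ℂ) with hN
  have hNne : N ≠ 0 := by
    rw [hN]
    simp [Fintype.card_ne_zero]
  set π : ((GL (Fin n) 𝔽 ⧸ BorelGL 𝔽 n) → ℂ) →ₗ[ℂ] ((GL (Fin n) 𝔽 ⧸ BorelGL 𝔽 n) → ℂ) :=
    N⁻¹ • (∑ g : GL (Fin n) 𝔽, (permRep 𝔽 n g) ∘ₗ π₀ ∘ₗ (permRep 𝔽 n g⁻¹)) with hπ
  have hπval : ∀ v, π v = N⁻¹ • (∑ g : GL (Fin n) 𝔽,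
      permRep 𝔽 n g (π₀ (permRep 𝔽 n g⁻¹ v))) := by
    intro v
    rw [hπ]
    simp [LinearMap.sum_apply]
  have hπP : ∀ v, π v ∈ P := by
    intro v
    rw [hπval]
    exact Submodule.smul_mem _ _ (Submodule.sum_mem _ (fun g _ => hP g _ (hπ₀P _)))
  have hπid : ∀ p ∈ P, π p = p := by
    intro p hp
    rw [hπval]
    have hterm : ∀ g : GL (Fin n) 𝔽,
        permRep 𝔽 n g (π₀ (permRep 𝔽 n g⁻¹ p)) = p := by
      intro g
      rw [hπ₀id _ (hP g⁻¹ p hp)]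
      have : permRep 𝔽 n g (permRep 𝔽 n g⁻¹ p) = permRep 𝔽 n (g * g⁻¹) p := by
        rw [_root_.map_mul]
        rfl
      rw [this, mul_inv_cancel, _root_.map_one]
      rfl
    rw [Finset.sum_congr rfl (fun g _ => hterm g), Finset.sum_const, Finset.card_univ]
    rw [← Nat.cast_smul_eq_nsmul ℂ, smul_smul, ← hN, inv_mul_cancel₀ hNne, one_smul]
  have hπcomm : ∀ (h : GL (Fin n) 𝔽) v, π (permRep 𝔽 n h v) = permRep 𝔽 n h (π v) := by
    intro h v
    rw [hπval, hπval, _root_.map_smul]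
    congr 1
    rw [_root_.map_sum]
    refine Fintype.sum_equiv (Equiv.mulLeft h⁻¹)
      (fun g => permRep 𝔽 n g (π₀ (permRep 𝔽 n g⁻¹ (permRep 𝔽 n h v))))
      (fun g => permRep 𝔽 n h (permRep 𝔽 n g (π₀ (permRep 𝔽 n g⁻¹ v)))) ?_
    intro g
    simp only [Equiv.coe_mulLeft]
    have h1 : permRep 𝔽 n g⁻¹ (permRep 𝔽 n h v) = permRep 𝔽 n ((h⁻¹ * g)⁻¹) v := by
      have : permRep 𝔽 n g⁻¹ (permRep 𝔽 n h v) = permRep 𝔽 n (g⁻¹ * h) v := by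
        rw [_root_.map_mul]; rfl
      rw [this, _root_.mul_inv_rev, inv_inv]
    rw [h1, ← permRep_mul_apply h (h⁻¹ * g), ← mul_assoc, mul_inv_cancel, one_mul]
  refine ⟨(LinearMap.ker π) ⊓ Zmod 𝔽 n, ?_, inf_le_right, ?_, ?_⟩
  · intro g v hv
    obtain ⟨hv1, hv2⟩ := Submodule.mem_inf.1 hv
    refine Submodule.mem_inf.2 ⟨?_, Zmod_invariant g v hv2⟩
    rw [LinearMap.mem_ker, hπcomm, LinearMap.mem_ker.1 hv1, _root_.map_zero]
  · rw [eq_bot_iff]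
    intro v hv
    obtain ⟨hvP, hvQ'⟩ := Submodule.mem_inf.1 hv
    obtain ⟨hvQ, -⟩ := Submodule.mem_inf.1 hvQ'
    have : π v = v := hπid v hvP
    rw [LinearMap.mem_ker.1 hvQ] at this
    rw [Submodule.mem_bot]
    exact this.symm
  · intro z hz
    refine ⟨π z, hπP z, z - π z, Submodule.mem_inf.2 ⟨?_, ?_⟩, by ring⟩
    · rw [LinearMap.mem_ker, _root_.map_sub, hπid _ (hπP z), sub_self]
    · exact Submodule.sub_mem _ hz (hPZ (hπP z))
end Maschke
/-- **Existence of the Steinberg representation of `GL_n`.** Let `𝔽` be a finite field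
with `q` elements, `n ≥ 1`, `G = GL_n(𝔽)`, and `B` the Borel subgroup of invertible
upper-triangular matrices. The permutation representation `ℂ[G/B]` of `G` has an
irreducible subrepresentation of dimension `q ^ (n (n - 1) / 2)`. -/
theorem exists_steinberg_subrepresentation (𝔽 : Type*) [Field 𝔽] [Fintype 𝔽]
    (q n : ℕ) (hq : Fintype.card 𝔽 = q) (hn : 1 ≤ n) :
    ∃ (W : Submodule ℂ ((GL (Fin n) 𝔽 ⧸ BorelGL 𝔽 n) → ℂ))
      (h : RepInvariant (permRep 𝔽 n) W),
      IsIrreducibleRep (subRep (permRep 𝔽 n) W h) ∧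
        Module.finrank ℂ W = q ^ (n * (n - 1) / 2) := by
  refine ⟨Zmod 𝔽 n, Zmod_invariant, ⟨?_, ?_⟩, finrank_Zmod q hq⟩
  · -- nontriviality
    intro heq
    have h1 : Module.finrank ℂ (⊥ : Submodule ℂ (Zmod 𝔽 n)) = 0 := finrank_bot ℂ _
    rw [heq, finrank_top, finrank_Zmod q hq] at h1
    have hq1 : 1 ≤ q := by rw [← hq]; exact Fintype.card_pos
    have := Nat.one_le_pow (n * (n - 1) / 2) q (by omega)
    omega
  · intro W' hW'
    set P := W'.map (Zmod 𝔽 n).subtype with hPdef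
    have hPZ : P ≤ Zmod 𝔽 n := by
      rintro v ⟨w, hw, rfl⟩
      exact w.2
    have hPinv : RepInvariant (permRep 𝔽 n) P := by
      intro g v hv
      obtain ⟨w, hw, rfl⟩ := hv
      exact ⟨(subRep (permRep 𝔽 n) _ Zmod_invariant) g w, hW' g w hw, rfl⟩
    by_cases hP1 : P = ⊥
    · left
      rw [eq_bot_iff]
      intro w hw
      have hmem : (Zmod 𝔽 n).subtype w ∈ P := ⟨w, hw, rfl⟩
      rw [hP1] at hmem
      have := (Submodule.mem_bot ℂ).1 hmem
      rw [Submodule.mem_bot]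
      exact Subtype.ext this
    by_cases hP2 : P = Zmod 𝔽 n
    · right
      rw [eq_top_iff]
      intro w _
      have hmem : (w : (GL (Fin n) 𝔽 ⧸ BorelGL 𝔽 n) → ℂ) ∈ P := by
        rw [hP2]; exact w.2
      obtain ⟨w', hw', hww⟩ := hmem
      rwa [← show w' = w from Subtype.ext hww]
    exfalso
    obtain ⟨Q, hQinv, hQZ, hPQ, hdecomp⟩ := invariant_complement hPinv hPZ
    have hQne : Q ≠ ⊥ := by
      intro hQbot
      apply hP2
      apply le_antisymm hPZ
      intro z hz
      obtain ⟨p, hp, qv, hqv, hsum⟩ := hdecomp z hz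
      rw [hQbot] at hqv
      rw [(Submodule.mem_bot ℂ).1 hqv, add_zero] at hsum
      rwa [← hsum]
    obtain ⟨f₁, hf₁P, hf₁ne, hf₁B⟩ := exists_B_fixed hPinv hP1
    obtain ⟨f₂, hf₂Q, hf₂ne, hf₂B⟩ := exists_B_fixed hQinv hQne
    have hfix : ∀ (f : (GL (Fin n) 𝔽 ⧸ BorelGL 𝔽 n) → ℂ),
        (∀ b ∈ BorelGL 𝔽 n, permRep 𝔽 n b f = f) →
        ∀ b ∈ BorelGL 𝔽 n, ∀ x, f (b • x) = f x := by
      intro f hf b hb x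
      have := congrFun (hf b⁻¹ ((BorelGL 𝔽 n).inv_mem hb)) x
      rw [permRep_apply, inv_inv] at this
      exact this
    set t₀ : GL (Fin n) 𝔽 ⧸ BorelGL 𝔽 n := QuotientGroup.mk (permGL 𝔽 Fin.revPerm) with ht₀
    have ht₀opp : OppC t₀ := OppC_permGL.2 rfl
    have hval : ∀ f, f ∈ Zmod 𝔽 n → (∀ b ∈ BorelGL 𝔽 n, ∀ x, f (b • x) = f x) →
        f t₀ = 0 → f = 0 := by
      intro f hfZ hfB hft₀
      funext x
      exact straighten hfZ (fun s hs => by rw [oppc_const hfB hs ht₀opp, hft₀]) x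
    have hc₁ : f₁ t₀ ≠ 0 := fun h0 => hf₁ne (hval f₁ (hPZ hf₁P) (hfix f₁ hf₁B) h0)
    have hc₂ : f₂ t₀ ≠ 0 := fun h0 => hf₂ne (hval f₂ (hQZ hf₂Q) (hfix f₂ hf₂B) h0)
    set g₀ : (GL (Fin n) 𝔽 ⧸ BorelGL 𝔽 n) → ℂ := f₂ t₀ • f₁ - f₁ t₀ • f₂ with hg₀
    have hg₀Z : g₀ ∈ Zmod 𝔽 n :=
      Submodule.sub_mem _ (Submodule.smul_mem _ _ (hPZ hf₁P)) (Submodule.smul_mem _ _ (hQZ hf₂Q))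
    have hg₀B : ∀ b ∈ BorelGL 𝔽 n, ∀ x, g₀ (b • x) = g₀ x := by
      intro b hb x
      rw [hg₀]
      simp only [Pi.sub_apply, Pi.smul_apply, smul_eq_mul]
      rw [hfix f₁ hf₁B b hb x, hfix f₂ hf₂B b hb x]
    have hg₀t₀ : g₀ t₀ = 0 := by
      rw [hg₀]
      simp only [Pi.sub_apply, Pi.smul_apply, smul_eq_mul]
      ring
    have hg₀0 : g₀ = 0 := hval g₀ hg₀Z hg₀B hg₀t₀
    have heqf : f₂ t₀ • f₁ = f₁ t₀ • f₂ := by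
      have := sub_eq_zero.1 (hg₀ ▸ hg₀0)
      exact this
    have hmemP : f₂ t₀ • f₁ ∈ P := Submodule.smul_mem _ _ hf₁P
    have hmemQ : f₂ t₀ • f₁ ∈ Q := by rw [heqf]; exact Submodule.smul_mem _ _ hf₂Q
    have : f₂ t₀ • f₁ ∈ P ⊓ Q := Submodule.mem_inf.2 ⟨hmemP, hmemQ⟩
    rw [hPQ, Submodule.mem_bot] at this
    rcases smul_eq_zero.1 this with hc | hc
    · exact hc₂ hc
    · exact hf₁ne hc
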